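/- Let P be a wulpo that is a box-augmentation of nonempty linearly well-ordered posets C₁, …, Cₙ and a wulpo Q, via a bijection η : C₁ × ⋯ × Cₙ × Q → P. Let q ∈ Q and q' ∈ Q ∪ {∞} with q < q' be such that [q, q') is a maximal branching free interval of Q, let α = rank(Q↾[q, q')) > 0, and let 0ᵢ be the minimal element of Cᵢ. Then rank(η(0₁, …, 0ₙ, q), P) ≤ rank(C₁) ⊗ ⋯ ⊗ rank(Cₙ) ⊗ rank(q, Q), and for every q̂ ∈ [q, q') and all cᵢ ∈ Cᵢ, rank(η(c₁, …, cₙ, q̂), P) < rank(C₁) ⊗ ⋯ ⊗ rank(Cₙ) ⊗ (rank(q, Q) + α), where ⊗ is the natural (Hessenberg) product and + the usual ordinal sum. -/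

import Mathlib

universe v

namespace Ordinal

/-- Natural (Hessenberg) sum of ordinals, as in the older Mathlib (`blsub` spelled as `⨆ succ`). -/
noncomputable def nadd (a b : Ordinal.{v}) : Ordinal.{v} :=
  max (⨆ x : Set.Iio a, Order.succ (nadd x.1 b)) (⨆ x : Set.Iio b, Order.succ (nadd a x.1))
termination_by (a, b)
decreasing_by
  all_goals first
    | exact Prod.Lex.left _ _ x.2
    | exact Prod.Lex.right _ x.2

/-- Natural (Hessenberg) product of ordinals, as in the older Mathlib. -/
noncomputable def nmul (a b : Ordinal.{v}) : Ordinal.{v} :=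
  sInf {c | ∀ a' < a, ∀ b' < b, nadd (nmul a' b) (nmul a b') < nadd c (nmul a' b')}
termination_by (a, b)
decreasing_by
  all_goals first
    | (apply Prod.Lex.left; assumption)
    | (apply Prod.Lex.right; assumption)

end Ordinal

namespace NaturalOps

infixl:70 " ⨳ " => Ordinal.nmul

end NaturalOps

open NaturalOps

universe u

/-- The interval `[p₁, p₂)`, where the right endpoint may be `∞` (i.e. `⊤` in `WithTop P`). -/
def Ival {P : Type u} [PartialOrder P] (p₁ : P) (p₂ : WithTop P) : Set P :=
  {p : P | p₁ ≤ p ∧ (p : WithTop P) < p₂}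

/-- The interval `[p₁, p₂)` is branching free: for every `p ∈ [p₁, p₂)` and every `x < p`,
the elements `x` and `p₁` are comparable. -/
def BranchingFree {P : Type u} [PartialOrder P] (p₁ : P) (p₂ : WithTop P) : Prop :=
  ∀ p ∈ Ival p₁ p₂, ∀ x : P, x < p → x ≤ p₁ ∨ p₁ ≤ x

/-- `[p₁, p₂)` is a maximal branching free interval. -/
def MaxBranchingFree {P : Type u} [PartialOrder P] (p₁ : P) (p₂ : WithTop P) : Prop :=
  (p₁ : WithTop P) ≤ p₂ ∧ BranchingFree p₁ p₂ ∧
    ∀ (q₁ : P) (q₂ : WithTop P), (q₁ : WithTop P) ≤ q₂ → BranchingFree q₁ q₂ →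
      Ival p₁ p₂ ⊆ Ival q₁ q₂ → Ival p₁ p₂ = Ival q₁ q₂

/-- A partial order is upwards linear if for every `p` the set `{x | p < x}` is linearly
ordered. -/
def UpwardsLinear (P : Type u) [PartialOrder P] : Prop :=
  ∀ p x y : P, p < x → p < y → x ≤ y ∨ y ≤ x

/-- `η` witnesses that `A` is a box-augmentation of the factors `C 0, …, C (n-1)` and `Q`:
it is a bijection which is an order embedding in each coordinate separately. -/
def IsBoxAugmentationWith {n : ℕ} (A : Type u) [PartialOrder A] (C : Fin n → Type u)
    [∀ i, PartialOrder (C i)] (Q : Type u) [PartialOrder Q]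
    (η : ((∀ i, C i) × Q) ≃ A) : Prop :=
  (∀ (k : Fin n) (d : ∀ i, C i) (q : Q) (e e' : C k),
      e ≤ e' ↔ η (Function.update d k e, q) ≤ η (Function.update d k e', q)) ∧
  (∀ (d : ∀ i, C i) (q q' : Q), q ≤ q' ↔ η (d, q) ≤ η (d, q'))

/-- The ordinal rank of an element of a well-founded partial order. -/
noncomputable def elRank {P : Type u} [PartialOrder P] [WellFoundedLT P] (p : P) :
    Ordinal.{u} :=
  IsWellFounded.rank (α := P) (· < ·) p

/-- The ordinal rank of a well-founded partial order. -/
noncomputable def ordRank (P : Type u) [PartialOrder P] [WellFoundedLT P] : Ordinal.{u} :=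
  ⨆ p : P, elRank p + 1


infixl:65 " ♯ " => Ordinal.nadd

namespace Ordinal

theorem nadd_def' (a b : Ordinal) :
    a ♯ b = max (⨆ x : Set.Iio a, Order.succ (x.1 ♯ b)) (⨆ x : Set.Iio b, Order.succ (a ♯ x.1)) :=
  Ordinal.nadd.eq_1 a b

theorem lt_nadd_iff {a b c : Ordinal} :
    a < b ♯ c ↔ (∃ b' < b, a ≤ b' ♯ c) ∨ ∃ c' < c, a ≤ b ♯ c' := by
  rw [nadd_def', lt_max_iff, Ordinal.lt_iSup_iff, Ordinal.lt_iSup_iff]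
  simp [Order.lt_succ_iff]

theorem nadd_le_iff {a b c : Ordinal} :
    b ♯ c ≤ a ↔ (∀ b' < b, b' ♯ c < a) ∧ ∀ c' < c, b ♯ c' < a := by
  rw [nadd_def', max_le_iff, Ordinal.iSup_le_iff, Ordinal.iSup_le_iff]
  simp [Order.succ_le_iff]

theorem nadd_lt_nadd_left {b c : Ordinal} (h : b < c) (a : Ordinal) : a ♯ b < a ♯ c :=
  lt_nadd_iff.2 (Or.inr ⟨b, h, le_rfl⟩)

theorem nadd_lt_nadd_right {b c : Ordinal} (h : b < c) (a : Ordinal) : b ♯ a < c ♯ a :=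
  lt_nadd_iff.2 (Or.inl ⟨b, h, le_rfl⟩)

theorem nadd_le_nadd_left {b c : Ordinal} (h : b ≤ c) (a : Ordinal) : a ♯ b ≤ a ♯ c := by
  rcases h.lt_or_eq with h | rfl
  · exact (nadd_lt_nadd_left h a).le
  · exact le_rfl

theorem nadd_le_nadd_right {b c : Ordinal} (h : b ≤ c) (a : Ordinal) : b ♯ a ≤ c ♯ a := by
  rcases h.lt_or_eq with h | rfl
  · exact (nadd_lt_nadd_right h a).le
  · exact le_rfl

theorem nadd_le_nadd {a b c d : Ordinal} (h₁ : a ≤ b) (h₂ : c ≤ d) : a ♯ c ≤ b ♯ d :=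
  (nadd_le_nadd_left h₂ a).trans (nadd_le_nadd_right h₁ d)

theorem nadd_lt_nadd_of_le_of_lt {a b c d : Ordinal} (h₁ : a ≤ b) (h₂ : c < d) :
    a ♯ c < b ♯ d :=
  (nadd_lt_nadd_left h₂ a).trans_le (nadd_le_nadd_right h₁ d)

theorem nadd_lt_nadd_of_lt_of_le {a b c d : Ordinal} (h₁ : a < b) (h₂ : c ≤ d) :
    a ♯ c < b ♯ d :=
  (nadd_le_nadd_left h₂ a).trans_lt (nadd_lt_nadd_right h₁ d)

theorem nadd_lt_nadd_iff_right {a b : Ordinal} (c : Ordinal) : a ♯ c < b ♯ c ↔ a < b :=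
  ⟨fun h => lt_of_not_ge fun h' => h.not_ge (nadd_le_nadd_right h' c),
    fun h => nadd_lt_nadd_right h c⟩

theorem nadd_le_nadd_iff_right {a b : Ordinal} (c : Ordinal) : a ♯ c ≤ b ♯ c ↔ a ≤ b :=
  ⟨fun h => le_of_not_gt fun h' => h.not_gt (nadd_lt_nadd_right h' c),
    fun h => nadd_le_nadd_right h c⟩

theorem nadd_comm (a b : Ordinal) : a ♯ b = b ♯ a := by
  induction a using Ordinal.induction generalizing b with
  | h a IHa =>
  induction b using Ordinal.induction with
  | h b IHb =>
  have h1 : ∀ x : Set.Iio a, Order.succ (x.1 ♯ b) = Order.succ (b ♯ x.1) :=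
    fun x => by rw [IHa x.1 x.2]
  have h2 : ∀ x : Set.Iio b, Order.succ (a ♯ x.1) = Order.succ (x.1 ♯ a) :=
    fun x => by rw [IHb x.1 x.2]
  rw [nadd_def', nadd_def' b a, iSup_congr h1, iSup_congr h2, max_comm]

@[simp]
theorem nadd_zero (a : Ordinal) : a ♯ 0 = a := by
  induction a using Ordinal.induction with
  | h a IH =>
  apply le_antisymm
  · rw [nadd_le_iff]
    exact ⟨fun b hb => by rwa [IH b hb], fun c hc => absurd hc (by simp)⟩
  · refine le_of_forall_lt fun c hc => ?_
    rw [← IH c hc]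
    exact nadd_lt_nadd_right hc 0

@[simp]
theorem zero_nadd (a : Ordinal) : 0 ♯ a = a := by rw [nadd_comm, nadd_zero]

theorem le_self_nadd {a b : Ordinal} : a ≤ a ♯ b := by
  calc a = a ♯ 0 := (nadd_zero a).symm
    _ ≤ a ♯ b := nadd_le_nadd_left zero_le a

theorem nadd_succ (a b : Ordinal) : a ♯ Order.succ b = Order.succ (a ♯ b) := by
  induction a using Ordinal.induction with
  | h a IH =>
  apply le_antisymm
  · rw [nadd_le_iff]
    constructor
    · intro a' ha
      rw [IH a' ha, Order.succ_lt_succ_iff]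
      exact nadd_lt_nadd_right ha b
    · intro c hc
      rw [Order.lt_succ_iff]
      exact nadd_le_nadd_left (Order.lt_succ_iff.1 hc) a
  · exact Order.succ_le_of_lt (nadd_lt_nadd_left (Order.lt_succ b) a)

theorem succ_nadd (a b : Ordinal) : Order.succ a ♯ b = Order.succ (a ♯ b) := by
  rw [nadd_comm, nadd_succ, nadd_comm]

theorem nadd_assoc (a b c : Ordinal) : a ♯ b ♯ c = a ♯ (b ♯ c) := by
  induction a using Ordinal.induction generalizing b c with
  | h a IHa =>
  induction b using Ordinal.induction generalizing c with
  | h b IHb =>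
  induction c using Ordinal.induction with
  | h c IHc =>
  apply le_antisymm
  · rw [nadd_le_iff]
    constructor
    · intro d hd
      rcases lt_nadd_iff.1 hd with ⟨a', ha, hd⟩ | ⟨b', hb, hd⟩
      · calc d ♯ c ≤ a' ♯ b ♯ c := nadd_le_nadd_right hd c
          _ = a' ♯ (b ♯ c) := IHa a' ha b c
          _ < a ♯ (b ♯ c) := nadd_lt_nadd_right ha _
      · calc d ♯ c ≤ a ♯ b' ♯ c := nadd_le_nadd_right hd c
          _ = a ♯ (b' ♯ c) := IHb b' hb c
          _ < a ♯ (b ♯ c) := nadd_lt_nadd_left (nadd_lt_nadd_right hb c) a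
    · intro c' hc
      rw [IHc c' hc]
      exact nadd_lt_nadd_left (nadd_lt_nadd_left hc b) a
  · rw [nadd_le_iff]
    constructor
    · intro a' ha
      rw [← IHa a' ha b c]
      exact nadd_lt_nadd_right (nadd_lt_nadd_right ha b) c
    · intro e he
      rcases lt_nadd_iff.1 he with ⟨b', hb, he⟩ | ⟨c', hc, he⟩
      · calc a ♯ e ≤ a ♯ (b' ♯ c) := nadd_le_nadd_left he a
          _ = a ♯ b' ♯ c := (IHb b' hb c).symm
          _ < a ♯ b ♯ c := nadd_lt_nadd_right (nadd_lt_nadd_left hb a) c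
      · calc a ♯ e ≤ a ♯ (b ♯ c') := nadd_le_nadd_left he a
          _ = a ♯ b ♯ c' := (IHc c' hc).symm
          _ < a ♯ b ♯ c := nadd_lt_nadd_left hc _

instance natOpsNaddComm : Std.Commutative (α := Ordinal) Ordinal.nadd := ⟨nadd_comm⟩
instance natOpsNaddAssoc : Std.Associative (α := Ordinal) Ordinal.nadd := ⟨nadd_assoc⟩

theorem add_le_nadd (a b : Ordinal) : a + b ≤ a ♯ b := by
  induction b using Ordinal.induction with
  | h b IH =>
  refine le_of_forall_lt fun d hd => ?_
  rcases lt_or_ge d a with h | h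
  · exact h.trans_le le_self_nadd
  · have hd' : d - a < b := by
      rwa [← add_lt_add_iff_left a, Ordinal.add_sub_cancel_of_le h]
    calc d = a + (d - a) := (Ordinal.add_sub_cancel_of_le h).symm
      _ ≤ a ♯ (d - a) := IH _ hd'
      _ < a ♯ b := nadd_lt_nadd_left hd' a

theorem nadd_one (a : Ordinal) : a ♯ 1 = Order.succ a := by
  rw [show (1 : Ordinal) = Order.succ 0 by simp, nadd_succ, nadd_zero]

/-! natural multiplication -/

theorem nmul_def (a b : Ordinal) :
    a ⨳ b = sInf {c | ∀ a' < a, ∀ b' < b, a' ⨳ b ♯ a ⨳ b' < c ♯ a' ⨳ b'} :=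
  Ordinal.nmul.eq_1 a b

theorem nmul_nonempty (a b : Ordinal.{v}) :
    {c : Ordinal.{v} | ∀ a' < a, ∀ b' < b, a' ⨳ b ♯ a ⨳ b' < c ♯ a' ⨳ b'}.Nonempty := by
  refine ⟨⨆ p : Set.Iio a × Set.Iio b, Order.succ (p.1.1 ⨳ b ♯ a ⨳ p.2.1), ?_⟩
  intro a' ha b' hb
  refine lt_of_lt_of_le ?_ le_self_nadd
  exact Ordinal.lt_iSup_iff.2 ⟨(⟨a', ha⟩, ⟨b', hb⟩), Order.lt_succ _⟩

theorem nmul_nadd_lt {a a' b b' : Ordinal} (ha : a' < a) (hb : b' < b) :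
    a' ⨳ b ♯ a ⨳ b' < a ⨳ b ♯ a' ⨳ b' := by
  have := csInf_mem (nmul_nonempty a b)
  rw [← nmul_def] at this
  exact this a' ha b' hb

theorem nmul_nadd_le {a a' b b' : Ordinal} (ha : a' ≤ a) (hb : b' ≤ b) :
    a' ⨳ b ♯ a ⨳ b' ≤ a ⨳ b ♯ a' ⨳ b' := by
  rcases ha.lt_or_eq with ha | rfl
  · rcases hb.lt_or_eq with hb | rfl
    · exact (nmul_nadd_lt ha hb).le
    · rw [nadd_comm]
  · exact le_rfl

theorem lt_nmul_iff {a b c : Ordinal} :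
    c < a ⨳ b ↔ ∃ a' < a, ∃ b' < b, c ♯ a' ⨳ b' ≤ a' ⨳ b ♯ a ⨳ b' := by
  refine ⟨fun h => ?_, ?_⟩
  · rw [nmul_def] at h
    have := notMem_of_lt_csInf h (OrderBot.bddBelow _)
    simpa using this
  · rintro ⟨a', ha, b', hb, h⟩
    have := h.trans_lt (nmul_nadd_lt ha hb)
    rwa [nadd_lt_nadd_iff_right] at this

theorem nmul_le_iff {a b c : Ordinal} :
    a ⨳ b ≤ c ↔ ∀ a' < a, ∀ b' < b, a' ⨳ b ♯ a ⨳ b' < c ♯ a' ⨳ b' := by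
  rw [← not_iff_not]
  simp [lt_nmul_iff]

theorem nmul_comm (a b : Ordinal) : a ⨳ b = b ⨳ a := by
  induction a using Ordinal.induction generalizing b with
  | h a IHa =>
  induction b using Ordinal.induction with
  | h b IHb =>
  rw [nmul_def a b, nmul_def b a]
  congr 1
  ext x
  simp only [Set.mem_setOf_eq]
  constructor <;> intro H c hc d hd
  · have h := H d hd c hc
    rw [IHa d hd b, IHb c hc, IHa d hd c, nadd_comm] at h
    exact h
  · have h := H d hd c hc
    rw [← IHb d hd, ← IHa c hc b, ← IHa c hc d, nadd_comm] at h
    exact h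

@[simp]
theorem nmul_zero (a : Ordinal) : a ⨳ 0 = 0 :=
  le_antisymm (nmul_le_iff.2 fun _ _ b' hb => absurd hb (by simp)) zero_le

@[simp]
theorem zero_nmul (a : Ordinal) : 0 ⨳ a = 0 := by rw [nmul_comm, nmul_zero]

@[simp]
theorem nmul_one (a : Ordinal) : a ⨳ 1 = a := by
  induction a using Ordinal.induction with
  | h a IH =>
  apply le_antisymm
  · rw [nmul_le_iff]
    intro a' ha b' hb
    rw [Ordinal.lt_one_iff_zero.1 hb, IH a' ha, nmul_zero, nmul_zero, nadd_zero, nadd_zero]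
    exact ha
  · refine le_of_forall_lt fun c hc => ?_
    rw [lt_nmul_iff]
    refine ⟨c, hc, 0, zero_lt_one, ?_⟩
    rw [IH c hc, nmul_zero, nmul_zero, nadd_zero]

@[simp]
theorem one_nmul (a : Ordinal) : 1 ⨳ a = a := by rw [nmul_comm, nmul_one]

theorem nmul_lt_nmul_of_pos_left {a b c : Ordinal} (h₁ : a < b) (h₂ : 0 < c) :
    c ⨳ a < c ⨳ b :=
  lt_nmul_iff.2 ⟨0, h₂, a, h₁, by rw [zero_nmul, zero_nmul, nadd_zero, zero_nadd]⟩

theorem nmul_lt_nmul_of_pos_right {a b c : Ordinal} (h₁ : a < b) (h₂ : 0 < c) :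
    a ⨳ c < b ⨳ c := by
  rw [nmul_comm a, nmul_comm b]
  exact nmul_lt_nmul_of_pos_left h₁ h₂

theorem nmul_le_nmul_left {a b : Ordinal} (h : a ≤ b) (c : Ordinal) : c ⨳ a ≤ c ⨳ b := by
  rcases (show (0:Ordinal) ≤ c from zero_le).lt_or_eq with hc | rfl
  · rcases h.lt_or_eq with h | rfl
    · exact (nmul_lt_nmul_of_pos_left h hc).le
    · exact le_rfl
  · rw [zero_nmul, zero_nmul]

theorem nmul_le_nmul_right {a b : Ordinal} (h : a ≤ b) (c : Ordinal) : a ⨳ c ≤ b ⨳ c := by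
  rw [nmul_comm a, nmul_comm b]
  exact nmul_le_nmul_left h c

theorem nmul_nadd (a b c : Ordinal) : a ⨳ (b ♯ c) = a ⨳ b ♯ a ⨳ c := by
  induction a using Ordinal.induction generalizing b c with
  | h a IHa =>
  induction b using Ordinal.induction generalizing c with
  | h b IHb =>
  induction c using Ordinal.induction with
  | h c IHc =>
  apply le_antisymm
  · rw [nmul_le_iff]
    intro a' ha d hd
    rcases lt_nadd_iff.1 hd with ⟨b', hb, hd⟩ | ⟨c', hc, hd⟩
    · have h1 := nmul_nadd_lt ha hb
      have h2 := nmul_nadd_le ha.le hd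
      rw [IHb b' hb c, IHa a' ha b' c] at h2
      have h3 := nadd_lt_nadd_of_lt_of_le h1 h2
      rw [IHa a' ha b c]
      rw [← nadd_lt_nadd_iff_right (a ⨳ b' ♯ a' ⨳ b')]
      convert h3 using 1 <;> ac_rfl
    · have h1 := nmul_nadd_lt ha hc
      have h2 := nmul_nadd_le ha.le hd
      rw [IHc c' hc, IHa a' ha b c'] at h2
      have h3 := nadd_lt_nadd_of_lt_of_le h1 h2
      rw [IHa a' ha b c]
      rw [← nadd_lt_nadd_iff_right (a ⨳ c' ♯ a' ⨳ c')]
      convert h3 using 1 <;> ac_rfl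
  · rw [nadd_le_iff]
    constructor
    · intro d hd
      rcases lt_nmul_iff.1 hd with ⟨a', ha, b', hb, hd⟩
      have h2 := nmul_nadd_lt ha (nadd_lt_nadd_right hb c)
      rw [IHa a' ha b c, IHb b' hb c, IHa a' ha b' c] at h2
      have e1 := nadd_le_nadd_right hd (a ⨳ c ♯ a' ⨳ c)
      rw [← nadd_lt_nadd_iff_right (a' ⨳ b' ♯ a' ⨳ c)]
      refine lt_of_le_of_lt ?_ (lt_of_le_of_lt e1 ?_)
      · exact le_of_eq (by ac_rfl)
      · convert h2 using 1 <;> ac_rfl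
    · intro d hd
      rcases lt_nmul_iff.1 hd with ⟨a', ha, c', hc, hd⟩
      have h2 := nmul_nadd_lt ha (nadd_lt_nadd_left hc b)
      rw [IHa a' ha b c, IHc c' hc, IHa a' ha b c'] at h2
      have e1 := nadd_le_nadd_right hd (a ⨳ b ♯ a' ⨳ b)
      rw [← nadd_lt_nadd_iff_right (a' ⨳ b ♯ a' ⨳ c')]
      refine lt_of_le_of_lt ?_ (lt_of_le_of_lt e1 ?_)
      · exact le_of_eq (by ac_rfl)
      · convert h2 using 1 <;> ac_rfl

theorem nadd_nmul (a b c : Ordinal) : (a ♯ b) ⨳ c = a ⨳ c ♯ b ⨳ c := by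
  rw [nmul_comm, nmul_nadd, nmul_comm c, nmul_comm c]

theorem nmul_add_one (a b : Ordinal) : a ⨳ (b + 1) = a ⨳ b ♯ a := by
  rw [Ordinal.add_one_eq_succ, ← nadd_one, nmul_nadd, nmul_one]

theorem nmul_nadd_lt₃ {a a' b b' c c' : Ordinal} (ha : a' < a) (hb : b' < b) (hc : c' < c) :
    a' ⨳ b ⨳ c ♯ a ⨳ b' ⨳ c ♯ a ⨳ b ⨳ c' ♯ a' ⨳ b' ⨳ c' <
      a ⨳ b ⨳ c ♯ a' ⨳ b' ⨳ c ♯ a' ⨳ b ⨳ c' ♯ a ⨳ b' ⨳ c' := by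
  have := nmul_nadd_lt (nmul_nadd_lt ha hb) hc
  rw [nadd_nmul, nadd_nmul, nadd_nmul, nadd_nmul] at this
  convert this using 1 <;> ac_rfl

theorem nmul_nadd_lt₃' {a a' b b' c c' : Ordinal} (ha : a' < a) (hb : b' < b) (hc : c' < c) :
    a' ⨳ (b ⨳ c) ♯ a ⨳ (b' ⨳ c) ♯ a ⨳ (b ⨳ c') ♯ a' ⨳ (b' ⨳ c') <
      a ⨳ (b ⨳ c) ♯ a' ⨳ (b' ⨳ c) ♯ a' ⨳ (b ⨳ c') ♯ a ⨳ (b' ⨳ c') := by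
  have := nmul_nadd_lt ha (nmul_nadd_lt hb hc)
  rw [nmul_nadd, nmul_nadd, nmul_nadd, nmul_nadd] at this
  convert this using 1 <;> ac_rfl

theorem lt_nmul_iff₃ {a b c d : Ordinal} (h : d < a ⨳ b ⨳ c) :
    ∃ a' < a, ∃ b' < b, ∃ c' < c,
      d ♯ a' ⨳ b' ⨳ c ♯ a' ⨳ b ⨳ c' ♯ a ⨳ b' ⨳ c' ≤
        a' ⨳ b ⨳ c ♯ a ⨳ b' ⨳ c ♯ a ⨳ b ⨳ c' ♯ a' ⨳ b' ⨳ c' := by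
  obtain ⟨e, he, c', hc, H₁⟩ := lt_nmul_iff.1 h
  obtain ⟨a', ha, b', hb, H₂⟩ := lt_nmul_iff.1 he
  refine ⟨a', ha, b', hb, c', hc, ?_⟩
  have H₃ := nmul_nadd_le H₂ hc.le
  rw [nadd_nmul, nadd_nmul, nadd_nmul, nadd_nmul] at H₃
  have H₄ := nadd_le_nadd H₁ H₃
  rw [← nadd_le_nadd_iff_right (e ⨳ c ♯ e ⨳ c')]
  convert H₄ using 1 <;> ac_rfl

theorem lt_nmul_iff₃' {a b c d : Ordinal} (h : d < a ⨳ (b ⨳ c)) :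
    ∃ a' < a, ∃ b' < b, ∃ c' < c,
      d ♯ a' ⨳ (b' ⨳ c) ♯ a' ⨳ (b ⨳ c') ♯ a ⨳ (b' ⨳ c') ≤
        a' ⨳ (b ⨳ c) ♯ a ⨳ (b' ⨳ c) ♯ a ⨳ (b ⨳ c') ♯ a' ⨳ (b' ⨳ c') := by
  obtain ⟨a', ha, e, he, H₁⟩ := lt_nmul_iff.1 h
  obtain ⟨b', hb, c', hc, H₂⟩ := lt_nmul_iff.1 he
  refine ⟨a', ha, b', hb, c', hc, ?_⟩
  have H₃ := nmul_nadd_le ha.le H₂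
  rw [nmul_nadd, nmul_nadd, nmul_nadd, nmul_nadd] at H₃
  have H₄ := nadd_le_nadd H₁ H₃
  rw [← nadd_le_nadd_iff_right (a ⨳ e ♯ a' ⨳ e)]
  convert H₄ using 1 <;> ac_rfl

theorem nmul_assoc (a b c : Ordinal) : a ⨳ b ⨳ c = a ⨳ (b ⨳ c) := by
  induction a using Ordinal.induction generalizing b c with
  | h a IHa =>
  induction b using Ordinal.induction generalizing c with
  | h b IHb =>
  induction c using Ordinal.induction with
  | h c IHc =>
  apply le_antisymm
  · refine le_of_not_gt fun h => ?_
    obtain ⟨a', ha, b', hb, c', hc, H⟩ := lt_nmul_iff₃ h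
    rw [IHa a' ha b c, IHa a' ha b' c', IHa a' ha b' c, IHa a' ha b c', IHb b' hb c,
      IHb b' hb c', IHc c' hc] at H
    exact lt_irrefl _ (H.trans_lt (nmul_nadd_lt₃' ha hb hc))
  · refine le_of_not_gt fun h => ?_
    obtain ⟨a', ha, b', hb, c', hc, H⟩ := lt_nmul_iff₃' h
    rw [← IHa a' ha b c, ← IHa a' ha b' c', ← IHa a' ha b' c, ← IHa a' ha b c', ← IHb b' hb c,
      ← IHb b' hb c', ← IHc c' hc] at H
    exact lt_irrefl _ (H.trans_lt (nmul_nadd_lt₃ ha hb hc))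

end Ordinal

namespace WulpoProof
open Ordinal

theorem nadd_opow_aux : ∀ g : Ordinal,
    (∀ a b, a < ω ^ g → b < ω ^ g → a ♯ b < ω ^ g) ∧
    (∀ (n m : ℕ) (s w : Ordinal), s < ω ^ g → w < ω ^ g →
      (ω ^ g * n + s) ♯ (ω ^ g * m + w) = ω ^ g * (n + m : ℕ) + (s ♯ w)) := by
  intro g
  induction g using Ordinal.induction with
  | h g IH =>
  have hp1 : ∀ a b, a < ω ^ g → b < ω ^ g → a ♯ b < ω ^ g := by
    intro a b ha hb
    rcases eq_or_ne g 0 with rfl | hg0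
    · rw [opow_zero, Ordinal.lt_one_iff_zero] at ha hb
      subst ha; subst hb
      simpa using opow_pos (0 : Ordinal) omega0_pos
    rcases eq_or_ne a 0 with rfl | ha0
    · simpa using hb
    rcases eq_or_ne b 0 with rfl | hb0
    · simpa using ha
    set d := max (log ω a) (log ω b) with hd
    have hdg : d < g := by
      apply max_lt <;> exact lt_log_of_lt_opow hg0 (by assumption)
    have hda : a < ω ^ d * ω := by
      rw [← opow_succ]
      exact (lt_opow_succ_log_self one_lt_omega0 a).trans_le
        (opow_le_opow_right omega0_pos (Order.succ_le_succ (le_max_left _ _)))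
    have hdb : b < ω ^ d * ω := by
      rw [← opow_succ]
      exact (lt_opow_succ_log_self one_lt_omega0 b).trans_le
        (opow_le_opow_right omega0_pos (Order.succ_le_succ (le_max_right _ _)))
    have hpow : (ω ^ d : Ordinal) ≠ 0 := opow_ne_zero _ omega0_ne_zero
    obtain ⟨n, hn⟩ := lt_omega0.1 ((div_lt hpow).2 hda)
    obtain ⟨m, hm⟩ := lt_omega0.1 ((div_lt hpow).2 hdb)
    have ha' : ω ^ d * n + a % ω ^ d = a := by rw [← hn]; exact div_add_mod a _
    have hb' : ω ^ d * m + b % ω ^ d = b := by rw [← hm]; exact div_add_mod b _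
    have hsa : a % ω ^ d < ω ^ d := mod_lt a hpow
    have hsb : b % ω ^ d < ω ^ d := mod_lt b hpow
    rw [← ha', ← hb', (IH d hdg).2 n m _ _ hsa hsb]
    calc ω ^ d * (n + m : ℕ) + (a % ω ^ d ♯ b % ω ^ d)
        < ω ^ d * (n + m : ℕ) + ω ^ d := add_lt_add_right ((IH d hdg).1 _ _ hsa hsb) _
      _ = ω ^ d * ((n + m : ℕ) + 1) := by rw [mul_add_one]
      _ < ω ^ d * ω := by
          apply mul_lt_mul_of_pos_left _ (opow_pos d omega0_pos)
          have h1 : ((n + m : ℕ) + 1 : Ordinal) = ((n + m + 1 : ℕ) : Ordinal) := by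
            exact_mod_cast rfl
          rw [h1]; exact nat_lt_omega0 _
      _ = ω ^ (Order.succ d) := by rw [opow_succ]
      _ ≤ ω ^ g := opow_le_opow_right omega0_pos (Order.succ_le_of_lt hdg)
  refine ⟨hp1, ?_⟩
  have hpow : (ω ^ g : Ordinal) ≠ 0 := opow_ne_zero _ omega0_ne_zero
  -- one-sided bound
  have main : ∀ (N : ℕ), (∀ M < N, ∀ (n m : ℕ), n + m = M → ∀ (s w : Ordinal),
        s < ω ^ g → w < ω ^ g →
        (ω ^ g * n + s) ♯ (ω ^ g * m + w) = ω ^ g * (n + m : ℕ) + (s ♯ w)) →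
      ∀ (n' m' : ℕ), n' + m' = N → ∀ (s' w' : Ordinal), s' < ω ^ g → w' < ω ^ g →
      (∀ s'' < s', (ω ^ g * n' + s'') ♯ (ω ^ g * m' + w')
          = ω ^ g * (n' + m' : ℕ) + (s'' ♯ w')) →
      ∀ u < ω ^ g * n' + s',
      u ♯ (ω ^ g * m' + w') < ω ^ g * (n' + m' : ℕ) + (s' ♯ w') := by
    intro N IHN n' m' hnm' s' w' hs' hw' IH' u hu
    rcases lt_or_ge u (ω ^ g * n') with h | h
    · obtain ⟨k, hk⟩ := lt_omega0.1 (((div_lt hpow).2 h).trans_le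
        (le_of_lt (nat_lt_omega0 n')))
      have hkn : k < n' := by
        have h2 := (div_lt hpow).2 h
        rw [hk] at h2
        exact_mod_cast h2
      have hu' : ω ^ g * k + u % ω ^ g = u := by rw [← hk]; exact div_add_mod u _
      have hum : u % ω ^ g < ω ^ g := mod_lt u hpow
      have e1 : (ω ^ g * k + u % ω ^ g) ♯ (ω ^ g * m' + w')
          = ω ^ g * (k + m' : ℕ) + (u % ω ^ g ♯ w') :=
        IHN (k + m') (by omega) k m' rfl _ _ hum hw'
      rw [← hu', e1]
      have hle : (k + m' + 1 : ℕ) ≤ n' + m' := by omega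
      calc ω ^ g * (k + m' : ℕ) + (u % ω ^ g ♯ w')
          < ω ^ g * (k + m' : ℕ) + ω ^ g := add_lt_add_right (hp1 _ _ hum hw') _
        _ = ω ^ g * ((k + m' : ℕ) + 1) := by rw [mul_add_one]
        _ ≤ ω ^ g * (n' + m' : ℕ) := by
            apply mul_le_mul_right
            have h1 : ((k + m' : ℕ) + 1 : Ordinal) = ((k + m' + 1 : ℕ) : Ordinal) := by
              exact_mod_cast rfl
            rw [h1]
            exact_mod_cast hle
        _ ≤ ω ^ g * (n' + m' : ℕ) + (s' ♯ w') := le_self_add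
    · have hu' : ω ^ g * n' + (u - ω ^ g * n') = u := Ordinal.add_sub_cancel_of_le h
      have hsu : u - ω ^ g * n' < s' := by
        have h3 : u < ω ^ g * n' + s' := hu
        rwa [← hu', add_lt_add_iff_left] at h3
      rw [← hu', IH' _ hsu]
      exact add_lt_add_right (nadd_lt_nadd_right hsu _) _
  have key : ∀ (N : ℕ), ∀ (n m : ℕ), n + m = N → ∀ (s : Ordinal), ∀ (w : Ordinal),
      s < ω ^ g → w < ω ^ g →
      (ω ^ g * n + s) ♯ (ω ^ g * m + w) = ω ^ g * (n + m : ℕ) + (s ♯ w) := by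
    intro N
    induction N using Nat.strong_induction_on with
    | _ N IHN =>
    intro n m hnm s
    induction s using Ordinal.induction with
    | h s IHs =>
    intro w
    induction w using Ordinal.induction with
    | h w IHw =>
    intro hs hw
    have IHN' : ∀ M < N, ∀ (n' m' : ℕ), n' + m' = M → ∀ (s' w' : Ordinal),
        s' < ω ^ g → w' < ω ^ g →
        (ω ^ g * n' + s') ♯ (ω ^ g * m' + w') = ω ^ g * (n' + m' : ℕ) + (s' ♯ w') := by
      intro M hM n' m' h' s' w' h1 h2
      exact IHN M hM n' m' h' s' w' h1 h2
    apply le_antisymm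
    · rw [nadd_le_iff]
      constructor
      · intro u hu
        subst hnm
        exact main _ IHN' n m rfl s w hs hw
          (fun s'' hss'' => IHs s'' hss'' w (hss''.trans hs) hw) u hu
      · intro v hv
        have hswap := main (m + n) (by rw [Nat.add_comm] at hnm; subst hnm; exact IHN')
          m n rfl w s hw hs
          (fun w'' hww'' => by
            have h4 := IHw w'' hww'' hs (hww''.trans hw)
            rw [nadd_comm (ω ^ g * m + w''), nadd_comm w'' s, Nat.add_comm m n]
            exact h4) v hv
        rw [nadd_comm]
        rw [Nat.add_comm n m, nadd_comm s w]
        exact hswap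
    · apply le_of_forall_lt
      intro z hz
      rcases lt_or_ge z (ω ^ g * (n + m : ℕ)) with h | h
      · apply h.trans_le
        have h1 : (ω ^ g * (n + m : ℕ) : Ordinal) = ω ^ g * n + ω ^ g * m := by
          rw [Nat.cast_add, mul_add]
        rw [h1]
        calc (ω ^ g * n + ω ^ g * m : Ordinal)
            ≤ (ω ^ g * n + s) + (ω ^ g * m + w) :=
            add_le_add (le_self_add) (le_self_add)
          _ ≤ (ω ^ g * n + s) ♯ (ω ^ g * m + w) := add_le_nadd _ _
      · have hz' : ω ^ g * (n + m : ℕ) + (z - ω ^ g * (n + m : ℕ)) = z :=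
          Ordinal.add_sub_cancel_of_le h
        have hy : z - ω ^ g * (n + m : ℕ) < s ♯ w := by
          rw [← add_lt_add_iff_left (ω ^ g * (n + m : ℕ)), hz']; exact hz
        rcases lt_nadd_iff.1 hy with ⟨s', hs', hy'⟩ | ⟨w', hw', hy'⟩
        · have h5 : z ≤ ω ^ g * (n + m : ℕ) + (s' ♯ w) := by
            rw [← hz']; exact add_le_add_right hy' _
          rw [← IHs s' hs' w (hs'.trans hs) hw] at h5
          exact h5.trans_lt (nadd_lt_nadd_right (add_lt_add_right hs' _) _)
        · have h5 : z ≤ ω ^ g * (n + m : ℕ) + (s ♯ w') := by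
            rw [← hz']; exact add_le_add_right hy' _
          rw [← IHw w' hw' hs (hw'.trans hw)] at h5
          exact h5.trans_lt (nadd_lt_nadd_left (add_lt_add_right hw' _) _)
  exact fun n m s w hs hw => key (n + m) n m rfl s w hs hw

theorem nadd_lt_opow {g a b : Ordinal} (ha : a < ω ^ g) (hb : b < ω ^ g) : a ♯ b < ω ^ g :=
  (nadd_opow_aux g).1 a b ha hb

theorem opow_mul_nat_nadd (g : Ordinal) (n m : ℕ) {s w : Ordinal}
    (hs : s < ω ^ g) (hw : w < ω ^ g) :
    (ω ^ g * n + s) ♯ (ω ^ g * m + w) = ω ^ g * (n + m : ℕ) + (s ♯ w) :=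
  (nadd_opow_aux g).2 n m s w hs hw

theorem opow_mul_nat_nadd' (g : Ordinal) (n m : ℕ) :
    (ω ^ g * n) ♯ (ω ^ g * m) = ω ^ g * (n + m : ℕ) := by
  have h0 : (0 : Ordinal) < ω ^ g := opow_pos _ omega0_pos
  simpa using opow_mul_nat_nadd g n m h0 h0

theorem opow_nmul_nat (g : Ordinal) (k : ℕ) : (ω ^ g) ⨳ (k : Ordinal) = ω ^ g * k := by
  induction k with
  | zero => simp
  | succ k IH =>
    have h1 : ((k + 1 : ℕ) : Ordinal) = (k : Ordinal) + 1 := by exact_mod_cast rfl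
    rw [h1, nmul_add_one, IH]
    have h2 := opow_mul_nat_nadd' g k 1
    simpa using h2

theorem opow_nmul_opow : ∀ e f : Ordinal, (ω ^ e) ⨳ (ω ^ f) = ω ^ (e ♯ f) := by
  intro e
  induction e using Ordinal.induction with
  | h e IHe =>
  intro f
  induction f using Ordinal.induction with
  | h f IHf =>
  -- auxiliary: a < ω ^ e' * k for some e' < e, natural k, whenever 0 ≠ a < ω ^ e
  have decomp : ∀ {x g : Ordinal}, x ≠ 0 → x < ω ^ g →
      ∃ g' < g, ∃ k : ℕ, x < ω ^ g' * k := by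
    intro x g hx0 hxg
    have hg0 : g ≠ 0 := by
      rintro rfl
      rw [opow_zero, Ordinal.lt_one_iff_zero] at hxg
      exact hx0 hxg
    refine ⟨log ω x, lt_log_of_lt_opow hg0 hxg, ?_⟩
    have hx : x < ω ^ log ω x * ω := by
      rw [← opow_succ]; exact lt_opow_succ_log_self one_lt_omega0 x
    obtain ⟨k, hk, hxk⟩ := (lt_mul_iff_of_isSuccLimit isSuccLimit_omega0).1 hx
    obtain ⟨k', rfl⟩ := lt_omega0.1 hk
    exact ⟨k', hxk⟩
  have posef : (0 : Ordinal) < ω ^ (e ♯ f) := opow_pos _ omega0_pos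
  -- left small-product bound
  have hA : ∀ a, a < ω ^ e → a ⨳ ω ^ f < ω ^ (e ♯ f) := by
    intro a ha
    rcases eq_or_ne a 0 with rfl | ha0
    · rwa [zero_nmul]
    obtain ⟨e', he', k, hk⟩ := decomp ha0 ha
    calc a ⨳ ω ^ f ≤ (ω ^ e' * k) ⨳ ω ^ f := nmul_le_nmul_right hk.le _
      _ = ((ω ^ e') ⨳ (k : Ordinal)) ⨳ ω ^ f := by rw [opow_nmul_nat]
      _ = ((ω ^ e') ⨳ (ω ^ f)) ⨳ (k : Ordinal) := by
          rw [nmul_assoc, nmul_assoc, nmul_comm (k : Ordinal)]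
      _ = ω ^ (e' ♯ f) * k := by rw [IHe e' he' f, opow_nmul_nat]
      _ < ω ^ (e' ♯ f) * ω := by
          apply mul_lt_mul_of_pos_left (nat_lt_omega0 k) (opow_pos _ omega0_pos)
      _ = ω ^ Order.succ (e' ♯ f) := by rw [opow_succ]
      _ ≤ ω ^ (e ♯ f) :=
          opow_le_opow_right omega0_pos (Order.succ_le_of_lt (nadd_lt_nadd_right he' f))
  have hB : ∀ b, b < ω ^ f → (ω ^ e) ⨳ b < ω ^ (e ♯ f) := by
    intro b hb
    rcases eq_or_ne b 0 with rfl | hb0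
    · rwa [nmul_zero]
    obtain ⟨f', hf', k, hk⟩ := decomp hb0 hb
    calc (ω ^ e) ⨳ b ≤ (ω ^ e) ⨳ (ω ^ f' * k) := nmul_le_nmul_left hk.le _
      _ = (ω ^ e) ⨳ ((ω ^ f') ⨳ (k : Ordinal)) := by rw [opow_nmul_nat]
      _ = ((ω ^ e) ⨳ (ω ^ f')) ⨳ (k : Ordinal) := by rw [nmul_assoc]
      _ = ω ^ (e ♯ f') * k := by rw [IHf f' hf', opow_nmul_nat]
      _ < ω ^ (e ♯ f') * ω := by
          apply mul_lt_mul_of_pos_left (nat_lt_omega0 k) (opow_pos _ omega0_pos)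
      _ = ω ^ Order.succ (e ♯ f') := by rw [opow_succ]
      _ ≤ ω ^ (e ♯ f) :=
          opow_le_opow_right omega0_pos (Order.succ_le_of_lt (nadd_lt_nadd_left hf' e))
  apply le_antisymm
  · rw [nmul_le_iff]
    intro a' ha' b' hb'
    exact lt_of_lt_of_le (nadd_lt_opow (hA a' ha') (hB b' hb')) le_self_nadd
  · apply le_of_forall_lt
    intro z hz
    have hpos : (0 : Ordinal) < (ω ^ e) ⨳ (ω ^ f) := by
      have h1 : (1 : Ordinal) ⨳ 1 ≤ (ω ^ e) ⨳ (ω ^ f) := by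
        apply le_trans (nmul_le_nmul_left (Ordinal.one_le_iff_ne_zero.2 (opow_pos _ omega0_pos).ne') 1)
        exact nmul_le_nmul_right (Ordinal.one_le_iff_ne_zero.2 (opow_pos _ omega0_pos).ne') _
      rw [nmul_one] at h1
      exact lt_of_lt_of_le zero_lt_one h1
    rcases eq_or_ne z 0 with rfl | hz0
    · exact hpos
    obtain ⟨h, hh, k, hk⟩ := decomp hz0 hz
    rcases lt_nadd_iff.1 hh with ⟨e', he', hee⟩ | ⟨f', hf', hff⟩
    · calc z < ω ^ h * k := hk
        _ ≤ ω ^ (e' ♯ f) * k := mul_le_mul_left (opow_le_opow_right omega0_pos hee) _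
        _ = ((ω ^ e') ⨳ (ω ^ f)) ⨳ (k : Ordinal) := by rw [IHe e' he' f, opow_nmul_nat]
        _ = ((ω ^ e') ⨳ (k : Ordinal)) ⨳ (ω ^ f) := by
            rw [nmul_assoc, nmul_assoc, nmul_comm (ω ^ f)]
        _ = (ω ^ e' * k) ⨳ (ω ^ f) := by rw [opow_nmul_nat]
        _ < (ω ^ e) ⨳ (ω ^ f) := by
            apply nmul_lt_nmul_of_pos_right _ (opow_pos _ omega0_pos)
            calc ω ^ e' * k < ω ^ e' * ω :=
                mul_lt_mul_of_pos_left (nat_lt_omega0 k) (opow_pos _ omega0_pos)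
              _ = ω ^ Order.succ e' := by rw [opow_succ]
              _ ≤ ω ^ e := opow_le_opow_right omega0_pos (Order.succ_le_of_lt he')
    · calc z < ω ^ h * k := hk
        _ ≤ ω ^ (e ♯ f') * k := mul_le_mul_left (opow_le_opow_right omega0_pos hff) _
        _ = ((ω ^ e) ⨳ (ω ^ f')) ⨳ (k : Ordinal) := by rw [IHf f' hf', opow_nmul_nat]
        _ = (ω ^ e) ⨳ ((ω ^ f') ⨳ (k : Ordinal)) := by rw [nmul_assoc]
        _ = (ω ^ e) ⨳ (ω ^ f' * k) := by rw [opow_nmul_nat]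
        _ < (ω ^ e) ⨳ (ω ^ f) := by
            apply nmul_lt_nmul_of_pos_left _ (opow_pos _ omega0_pos)
            calc ω ^ f' * k < ω ^ f' * ω :=
                mul_lt_mul_of_pos_left (nat_lt_omega0 k) (opow_pos _ omega0_pos)
              _ = ω ^ Order.succ f' := by rw [opow_succ]
              _ ≤ ω ^ f := opow_le_opow_right omega0_pos (Order.succ_le_of_lt hf')

/-- Key decomposition: for `0 < τ < δ`, either there is a "splitting point" `x` of `δ`
above `τ`, or `δ` ends in an `ω`-power chunk based below `τ`. -/
theorem cp : ∀ δ τ : Ordinal, 0 < τ → τ < δ →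
    (∃ x, τ ≤ x ∧ x < δ ∧ x ♯ (δ - x) = δ) ∨
    (∃ P : Ordinal, ∃ e : Ordinal, δ = P + ω ^ e ∧ P ♯ ω ^ e = δ ∧ P ≤ τ) := by
  intro δ
  induction δ using Ordinal.induction with
  | h δ IHδ =>
  intro τ hτ0 hτδ
  have hδ0 : δ ≠ 0 := fun h => zero_le.not_gt (h ▸ hτδ : τ < 0)
  set L := log ω δ with hL
  have hpow : (ω ^ L : Ordinal) ≠ 0 := opow_ne_zero _ omega0_ne_zero
  obtain ⟨n, hn⟩ := lt_omega0.1 (div_opow_log_lt δ one_lt_omega0)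
  have hδeq : ω ^ L * n + δ % ω ^ L = δ := by rw [← hn]; exact div_add_mod δ _
  have hrL : δ % ω ^ L < ω ^ L := mod_lt δ hpow
  have hn1 : 1 ≤ n := by
    by_contra hcon
    push_neg at hcon
    have h0 : n = 0 := by omega
    subst h0
    simp only [Nat.cast_zero, mul_zero, zero_add] at hδeq
    rw [hδeq] at hrL
    exact absurd (opow_log_le_self ω hδ0) (not_le.2 hrL)
  set r := δ % ω ^ L with hr'
  rcases eq_or_ne r 0 with hr | hr
  · -- δ = ω ^ L * n
    rw [hr, add_zero] at hδeq
    rcases Nat.eq_or_lt_of_le hn1 with h1 | h1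
    · -- n = 1 : δ = ω ^ L
      right
      have hδL : δ = ω ^ L := by rw [← hδeq, ← h1]; simp
      exact ⟨0, L, by rw [zero_add, hδL], by rw [zero_nadd, hδL], zero_le⟩
    · -- n ≥ 2
      have hcast : ((n - 1 : ℕ) : Ordinal) + 1 = (n : Ordinal) := by
        have h9 : n - 1 + 1 = n := by omega
        exact_mod_cast h9
      have hδeq2 : ω ^ L * ((n - 1 : ℕ) : Ordinal) + ω ^ L = δ := by
        rw [← mul_add_one, hcast, hδeq]
      have hC : (ω ^ L * ((n - 1 : ℕ) : Ordinal)) ♯ (ω ^ L) = δ := by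
        have h4 := opow_mul_nat_nadd' L (n - 1) 1
        rw [Nat.cast_one, mul_one] at h4
        rw [h4, show ((n - 1 + 1 : ℕ) : Ordinal) = (n : Ordinal) by congr 1; omega]
        exact hδeq
      have hlt : ω ^ L * ((n - 1 : ℕ) : Ordinal) < δ := by
        rw [← hδeq]
        apply mul_lt_mul_of_pos_left _ (opow_pos _ omega0_pos)
        exact_mod_cast Nat.sub_lt (by omega) one_pos
      rcases le_or_gt τ (ω ^ L * ((n - 1 : ℕ) : Ordinal)) with h | h
      · left
        refine ⟨ω ^ L * ((n - 1 : ℕ) : Ordinal), h, hlt, ?_⟩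
        have hsub : δ - ω ^ L * ((n - 1 : ℕ) : Ordinal) = ω ^ L := by
          rw [← hδeq2, Ordinal.add_sub_cancel]
        rw [hsub, hC]
      · right
        exact ⟨ω ^ L * ((n - 1 : ℕ) : Ordinal), L, hδeq2.symm, hC, h.le⟩
  · -- r ≠ 0
    rcases le_or_gt τ (ω ^ L * n) with h | h
    · left
      refine ⟨ω ^ L * n, h, ?_, ?_⟩
      · rw [← hδeq]
        exact lt_add_of_pos_right _ (pos_iff_ne_zero.2 hr)
      · have hsub : δ - ω ^ L * n = r := by rw [← hδeq, Ordinal.add_sub_cancel]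
        rw [hsub]
        have h4 := opow_mul_nat_nadd L n 0 (opow_pos L omega0_pos) hrL
        simp only [Nat.cast_zero, mul_zero, zero_add, Nat.add_zero, add_zero, zero_nadd] at h4
        rw [h4, hδeq]
    · -- τ > ω ^ L * n : recurse into r
      have hτ0' : (0 : Ordinal) < τ - ω ^ L * n := by
        rw [Ordinal.lt_sub]; simpa using h
      have hτr : τ - ω ^ L * n < r := by
        rw [Ordinal.sub_lt_of_le h.le, hδeq]
        exact hτδ
      have hrδ : r < δ := by
        calc r < ω ^ L := hrL
          _ ≤ ω ^ L * n := Ordinal.le_mul_left _ (by exact_mod_cast hn1)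
          _ ≤ δ := by rw [← hδeq]; exact le_self_add
      have hτeq : ω ^ L * n + (τ - ω ^ L * n) = τ := Ordinal.add_sub_cancel_of_le h.le
      rcases IHδ r hrδ (τ - ω ^ L * n) hτ0' hτr with ⟨x', h1, h2, h3⟩ | ⟨P', e, h1, h2, h3⟩
      · left
        refine ⟨ω ^ L * n + x', ?_, ?_, ?_⟩
        · rw [← hτeq]; exact add_le_add_right h1 _
        · rw [← hδeq]; exact add_lt_add_right h2 _
        · have hδ3 : (ω ^ L * n + x') + (r - x') = δ := by
            rw [add_assoc, Ordinal.add_sub_cancel_of_le h2.le, hδeq]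
          have hsub : δ - (ω ^ L * n + x') = r - x' := by
            rw [← hδ3, Ordinal.add_sub_cancel]
          rw [hsub]
          have hx'L : x' < ω ^ L := h2.trans hrL
          have hrx'L : r - x' < ω ^ L := lt_of_le_of_lt (sub_le_self _ _) hrL
          have h4 := opow_mul_nat_nadd L n 0 hx'L hrx'L
          simp only [Nat.cast_zero, mul_zero, zero_add, Nat.add_zero] at h4
          rw [h4, h3, hδeq]
      · right
        have hP'r : P' < r := by
          rw [h1]
          exact lt_add_of_pos_right _ (opow_pos _ omega0_pos)
        have heL : ω ^ e ≤ r := by rw [h1]; exact le_add_self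
        refine ⟨ω ^ L * n + P', e, ?_, ?_, ?_⟩
        · rw [← hδeq, h1, add_assoc]
        · have h4 := opow_mul_nat_nadd L n 0 (hP'r.trans hrL) (lt_of_le_of_lt heL hrL)
          simp only [Nat.cast_zero, mul_zero, zero_add, Nat.add_zero] at h4
          rw [h4, h2, hδeq]
        · rw [← hτeq]; exact add_le_add_right h3 _



instance : Std.Commutative (α := Ordinal) (· ♯ ·) := ⟨nadd_comm⟩
instance : Std.Associative (α := Ordinal) (· ♯ ·) := ⟨nadd_assoc⟩
instance : Std.Commutative (α := Ordinal) (· ⨳ ·) := ⟨nmul_comm⟩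
instance : Std.Associative (α := Ordinal) (· ⨳ ·) := ⟨nmul_assoc⟩

variable {W : Type u} [PartialOrder W] [WellFoundedLT W]

theorem elRank_lt_of_lt {x y : W} (h : x < y) : elRank x < elRank y :=
  IsWellFounded.rank_lt_of_rel h

theorem elRank_eq (p : W) : elRank p = ⨆ x : {y : W // y < p}, (elRank x.1 + 1) := by
  rw [elRank, IsWellFounded.rank_eq]
  simp only [← Ordinal.add_one_eq_succ]
  rfl

theorem le_ordRank (p : W) : elRank p + 1 ≤ ordRank W :=
  Ordinal.le_iSup (fun p : W => elRank p + 1) p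

theorem ordRank_le {a : Ordinal} (h : ∀ p : W, elRank p + 1 ≤ a) : ordRank W ≤ a :=
  Ordinal.iSup_le h

theorem ordRank_of_isEmpty (h : IsEmpty W) : ordRank W ≤ 0 :=
  ordRank_le fun p => h.elim p

theorem elRank_le_of_forall_lt {f : W → Ordinal} (hf : ∀ x y : W, x < y → f x < f y)
    (p : W) : elRank p ≤ f p := by
  induction p using IsWellFounded.induction (α := W) (· < ·) with
  | ind p IH =>
  rw [elRank_eq]
  apply Ordinal.iSup_le
  rintro ⟨x, hx⟩
  calc elRank x + 1 ≤ f x + 1 := add_le_add_left (IH x hx) 1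
    _ ≤ f p := by
        rw [Ordinal.add_one_eq_succ]
        exact Order.succ_le_of_lt (hf x p hx)

theorem elRank_subtype_eq {S : Set W} (hS : ∀ ⦃x y : W⦄, y < x → x ∈ S → y ∈ S) :
    ∀ (x : W) (hx : x ∈ S), elRank (⟨x, hx⟩ : ↥S) = elRank x := by
  intro x
  induction x using IsWellFounded.induction (α := W) (· < ·) with
  | ind x IH =>
  intro hx
  rw [elRank_eq (⟨x, hx⟩ : ↥S), elRank_eq x]
  apply le_antisymm
  · apply Ordinal.iSup_le
    rintro ⟨⟨y, hyS⟩, hy⟩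
    have hy' : y < x := hy
    rw [IH y hy' hyS]
    exact Ordinal.le_iSup (fun z : {y : W // y < x} => elRank z.1 + 1) ⟨y, hy'⟩
  · apply Ordinal.iSup_le
    rintro ⟨y, hy⟩
    have hyS : y ∈ S := hS hy hx
    rw [← IH y hy hyS]
    exact Ordinal.le_iSup
      (fun z : {q : ↥S // q < ⟨x, hx⟩} => elRank z.1 + 1) ⟨⟨y, hyS⟩, hy⟩

theorem elRank_le_of_subset {S T : Set W} (hST : S ⊆ T) :
    ∀ (x : W) (hx : x ∈ S), elRank (⟨x, hx⟩ : ↥S) ≤ elRank (⟨x, hST hx⟩ : ↥T) := by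
  intro x
  induction x using IsWellFounded.induction (α := W) (· < ·) with
  | ind x IH =>
  intro hx
  rw [elRank_eq (⟨x, hx⟩ : ↥S), elRank_eq]
  apply Ordinal.iSup_le
  rintro ⟨⟨y, hyS⟩, hy⟩
  have hy' : y < x := hy
  calc elRank (⟨y, hyS⟩ : ↥S) + 1 ≤ elRank (⟨y, hST hyS⟩ : ↥T) + 1 :=
      add_le_add_left (IH y hy' hyS) 1
    _ ≤ _ := Ordinal.le_iSup
      (fun z : {q : ↥T // q < ⟨x, hST hx⟩} => elRank z.1 + 1) ⟨⟨y, hST hyS⟩, hy'⟩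

theorem ordRank_le_of_subset {S T : Set W} (hST : S ⊆ T) : ordRank ↥S ≤ ordRank ↥T := by
  apply ordRank_le
  rintro ⟨x, hx⟩
  calc elRank (⟨x, hx⟩ : ↥S) + 1 ≤ elRank (⟨x, hST hx⟩ : ↥T) + 1 :=
      add_le_add_left (elRank_le_of_subset hST x hx) 1
    _ ≤ _ := le_ordRank _

theorem elRank_eq_ordRank (p : W) : elRank p = ordRank ↥{y : W | y < p} := by
  have hdc : ∀ ⦃x y : W⦄, y < x → x ∈ {y : W | y < p} → y ∈ {y : W | y < p} :=
    fun x y hyx hx => lt_trans hyx hx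
  rw [elRank_eq, ordRank]
  apply le_antisymm
  · apply Ordinal.iSup_le
    rintro ⟨y, hy⟩
    rw [← elRank_subtype_eq hdc y hy]
    exact Ordinal.le_iSup (fun z : ↥{y : W | y < p} => elRank z + 1) ⟨y, hy⟩
  · apply Ordinal.iSup_le
    rintro ⟨y, hy⟩
    rw [elRank_subtype_eq hdc y hy]
    exact Ordinal.le_iSup (fun z : {y : W // y < p} => elRank z.1 + 1) ⟨y, hy⟩

/-- rank of the part of `A` strictly below `w`. -/
noncomputable def rkIn (A : Set W) (w : W) : Ordinal.{u} :=
  ordRank ↥{x | x ∈ A ∧ x < w}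

theorem ordRank_eq_of_seteq {S T : Set W} (h : S = T) : ordRank ↥S = ordRank ↥T := by
  subst h; rfl

theorem rkIn_le_rkIn {A : Set W} {w w' : W} (h : w ≤ w') : rkIn A w ≤ rkIn A w' :=
  ordRank_le_of_subset fun x hx => ⟨hx.1, lt_of_lt_of_le hx.2 h⟩

theorem rkIn_le_elRank {A : Set W} {w : W} (hw : w ∈ A) :
    rkIn A w ≤ elRank (⟨w, hw⟩ : ↥A) := by
  apply ordRank_le
  rintro ⟨x, hx⟩
  have h1 := elRank_le_of_subset (S := {x | x ∈ A ∧ x < w}) (T := A) (fun y hy => hy.1) x hx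
  have h2 : elRank (⟨x, hx.1⟩ : ↥A) < elRank (⟨w, hw⟩ : ↥A) := elRank_lt_of_lt hx.2
  calc elRank (⟨x, hx⟩ : ↥{x | x ∈ A ∧ x < w}) + 1 ≤ elRank (⟨x, hx.1⟩ : ↥A) + 1 :=
      add_le_add_left h1 1
    _ ≤ _ := by rw [Ordinal.add_one_eq_succ]; exact Order.succ_le_of_lt h2

theorem rkIn_add_one_le {A : Set W} {w : W} (hw : w ∈ A) : rkIn A w + 1 ≤ ordRank ↥A :=
  le_trans (add_le_add_left (rkIn_le_elRank hw) 1) (le_ordRank _)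

theorem rkIn_lt_rkIn {A : Set W} {w w' : W} (hw : w ∈ A) (h : w < w') :
    rkIn A w < rkIn A w' := by
  have hset : {x | x ∈ {x | x ∈ A ∧ x < w'} ∧ x < w} = {x | x ∈ A ∧ x < w} := by
    ext x
    constructor
    · rintro ⟨⟨h1, _⟩, h3⟩; exact ⟨h1, h3⟩
    · rintro ⟨h1, h2⟩; exact ⟨⟨h1, h2.trans h⟩, h2⟩
  have h1 : rkIn A w ≤ elRank (⟨w, ⟨hw, h⟩⟩ : ↥{x | x ∈ A ∧ x < w'}) := by
    have h5 := rkIn_le_elRank (A := {x | x ∈ A ∧ x < w'}) (w := w) ⟨hw, h⟩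
    calc rkIn A w = rkIn {x | x ∈ A ∧ x < w'} w := (ordRank_eq_of_seteq hset).symm
      _ ≤ _ := h5
  have h2 := le_ordRank (⟨w, ⟨hw, h⟩⟩ : ↥{x | x ∈ A ∧ x < w'})
  calc rkIn A w < rkIn A w + 1 := lt_add_one _
    _ ≤ elRank (⟨w, ⟨hw, h⟩⟩ : ↥{x | x ∈ A ∧ x < w'}) + 1 := add_le_add_left h1 1
    _ ≤ rkIn A w' := h2

theorem fold_nadd_le {ι : Type v} [DecidableEq ι] (s : Finset ι) (f h : ι → Ordinal)
    (hle : ∀ c ∈ s, f c ≤ h c) :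
    s.fold (· ♯ ·) 0 f ≤ s.fold (· ♯ ·) 0 h := by
  induction s using Finset.induction with
  | empty => simp
  | @insert c t hct IH =>
    rw [Finset.fold_insert hct, Finset.fold_insert hct]
    exact nadd_le_nadd (hle c (Finset.mem_insert_self c t))
      (IH fun c' hc' => hle c' (Finset.mem_insert_of_mem hc'))

theorem fold_nadd_succ_le {ι : Type v} [DecidableEq ι] (s : Finset ι) (f h : ι → Ordinal)
    (hle : ∀ c ∈ s, f c ≤ h c) {c₀ : ι} (hc₀ : c₀ ∈ s) (hlt : f c₀ + 1 ≤ h c₀) :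
    s.fold (· ♯ ·) 0 f + 1 ≤ s.fold (· ♯ ·) 0 h := by
  induction s using Finset.induction with
  | empty => cases hc₀
  | @insert c t hct IH =>
    rw [Finset.fold_insert hct, Finset.fold_insert hct]
    rcases Finset.mem_insert.1 hc₀ with rfl | hc₀t
    · calc (f c₀ ♯ t.fold (· ♯ ·) 0 f) + 1 = (f c₀ + 1) ♯ t.fold (· ♯ ·) 0 f := by
            rw [Ordinal.add_one_eq_succ, Ordinal.add_one_eq_succ, succ_nadd]
        _ ≤ h c₀ ♯ t.fold (· ♯ ·) 0 h :=
            nadd_le_nadd hlt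
              (fold_nadd_le t f h fun c' hc' => hle c' (Finset.mem_insert_of_mem hc'))
    · calc (f c ♯ t.fold (· ♯ ·) 0 f) + 1 = f c ♯ (t.fold (· ♯ ·) 0 f + 1) := by
            rw [Ordinal.add_one_eq_succ, Ordinal.add_one_eq_succ, nadd_succ]
        _ ≤ h c ♯ t.fold (· ♯ ·) 0 h :=
            nadd_le_nadd (hle c (Finset.mem_insert_self c t))
              (IH (fun c' hc' => hle c' (Finset.mem_insert_of_mem hc')) hc₀t)

/-- The covering bound: if `W` is covered by the classes `K c`, `c ∈ s`, then its rank is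
at most the natural sum of the ranks of the classes. -/
theorem ordRank_le_fold_cover {ι : Type v} [DecidableEq ι] (s : Finset ι) (K : ι → Set W)
    (hcov : ∀ w : W, ∃ c ∈ s, w ∈ K c) :
    ordRank W ≤ s.fold (· ♯ ·) 0 (fun c => ordRank ↥(K c)) := by
  have hg : ∀ x y : W, x < y →
      s.fold (· ♯ ·) 0 (fun c => rkIn (K c) x) < s.fold (· ♯ ·) 0 (fun c => rkIn (K c) y) := by
    intro x y hxy
    obtain ⟨c₀, hc₀s, hc₀⟩ := hcov x
    have h1 : s.fold (· ♯ ·) 0 (fun c => rkIn (K c) x) + 1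
        ≤ s.fold (· ♯ ·) 0 (fun c => rkIn (K c) y) := by
      apply fold_nadd_succ_le s _ _ (fun c _ => rkIn_le_rkIn hxy.le) hc₀s
      rw [Ordinal.add_one_eq_succ]
      exact Order.succ_le_of_lt (rkIn_lt_rkIn hc₀ hxy)
    exact lt_of_lt_of_le (lt_add_one _) h1
  apply ordRank_le
  intro w
  obtain ⟨c₀, hc₀s, hc₀⟩ := hcov w
  calc elRank w + 1 ≤ s.fold (· ♯ ·) 0 (fun c => rkIn (K c) w) + 1 :=
      add_le_add_left (elRank_le_of_forall_lt hg w) 1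
    _ ≤ s.fold (· ♯ ·) 0 (fun c => ordRank ↥(K c)) := by
      apply fold_nadd_succ_le s _ _
        (fun c _ => ordRank_le_of_subset fun x hx => hx.1) hc₀s
      exact rkIn_add_one_le hc₀


section NProd

variable {m : ℕ}

/-- product over a finite index set, under the natural product. -/
noncomputable def np (s : Finset (Fin m)) (f : Fin m → Ordinal) : Ordinal :=
  s.fold (· ⨳ ·) 1 f

/-- natural product of all the entries of `f`. -/
noncomputable def nprod (f : Fin m → Ordinal) : Ordinal :=
  np Finset.univ f

theorem np_congr {s : Finset (Fin m)} {f g : Fin m → Ordinal}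
    (h : ∀ i ∈ s, f i = g i) : np s f = np s g :=
  Finset.fold_congr h

theorem np_extract {s : Finset (Fin m)} {f : Fin m → Ordinal} {c : Fin m} (hc : c ∈ s) :
    np s f = f c ⨳ np (s.erase c) f := by
  conv_lhs => rw [← Finset.insert_erase hc]
  rw [np, Finset.fold_insert (Finset.notMem_erase c s)]
  rfl

theorem np_pos {s : Finset (Fin m)} {f : Fin m → Ordinal} (h : ∀ i ∈ s, 0 < f i) :
    0 < np s f := by
  induction s using Finset.induction with
  | empty => simpa [np] using zero_lt_one
  | @insert c t hct IH =>
    rw [np, Finset.fold_insert hct]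
    have h1 : (0 : Ordinal) = 0 ⨳ np t f := by rw [zero_nmul]
    rw [h1]
    apply nmul_lt_nmul_of_pos_right (h c (Finset.mem_insert_self c t))
    exact IH fun i hi => h i (Finset.mem_insert_of_mem hi)

theorem nprod_pos {f : Fin m → Ordinal} (h : ∀ i, 0 < f i) : 0 < nprod f :=
  np_pos fun i _ => h i

theorem nprod_update {f : Fin m → Ordinal} (c : Fin m) (y : Ordinal) :
    nprod (Function.update f c y) = y ⨳ np (Finset.univ.erase c) f := by
  rw [nprod, np_extract (Finset.mem_univ c), Function.update_self]
  congr 1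
  exact np_congr fun i hi => Function.update_of_ne (Finset.ne_of_mem_erase hi) _ _

theorem nprod_eq_mul_erase {f : Fin m → Ordinal} (c : Fin m) :
    nprod f = f c ⨳ np (Finset.univ.erase c) f := by
  conv_lhs => rw [show f = Function.update f c (f c) by rw [Function.update_eq_self]]
  exact nprod_update c (f c)

theorem nprod_update_le {f : Fin m → Ordinal} {c : Fin m} {y : Ordinal} (h : y ≤ f c) :
    nprod (Function.update f c y) ≤ nprod f := by
  rw [nprod_update, nprod_eq_mul_erase c]
  exact nmul_le_nmul_right h _

theorem nprod_update_lt {f : Fin m → Ordinal} {c : Fin m} {y : Ordinal} (h : y < f c)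
    (hpos : ∀ i, 0 < f i) : nprod (Function.update f c y) < nprod f := by
  rw [nprod_update, nprod_eq_mul_erase c]
  exact nmul_lt_nmul_of_pos_right h (np_pos fun i _ => hpos i)

theorem nprod_update_nadd {f : Fin m → Ordinal} (c : Fin m) (x y : Ordinal) :
    nprod (Function.update f c x) ♯ nprod (Function.update f c y)
      = nprod (Function.update f c (x ♯ y)) := by
  rw [nprod_update, nprod_update, nprod_update, ← nadd_nmul]

theorem np_omega_split {f E : Fin m → Ordinal} :
    ∀ (s A : Finset (Fin m)), s ⊆ A → (∀ c ∈ s, f c = ω ^ E c) →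
    np A f = (ω ^ (s.fold (· ♯ ·) 0 E)) ⨳ np (A \ s) f := by
  intro s
  induction s using Finset.induction with
  | empty => intro A _ _; simp [np, Finset.fold_empty, opow_zero, one_nmul]
  | @insert c t hct IH =>
    intro A hsub hpure
    have hcA : c ∈ A := hsub (Finset.mem_insert_self c t)
    have htsub : t ⊆ A.erase c := by
      intro i hi
      exact Finset.mem_erase.2 ⟨fun he => hct (he ▸ hi), hsub (Finset.mem_insert_of_mem hi)⟩
    have hseteq : (A.erase c) \ t = A \ insert c t := by
      ext i
      simp only [Finset.mem_sdiff, Finset.mem_erase, Finset.mem_insert]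
      tauto
    rw [np_extract hcA, IH (A.erase c) htsub
      (fun c' hc' => hpure c' (Finset.mem_insert_of_mem hc')), hseteq,
      hpure c (Finset.mem_insert_self c t), ← nmul_assoc, opow_nmul_opow,
      Finset.fold_insert hct]

theorem pure_sum_aux {f τ E : Fin m → Ordinal} :
    ∀ s : Finset (Fin m), s.Nonempty →
    (∀ c ∈ s, f c = ω ^ E c ∧ 0 < τ c ∧ τ c < f c) →
    ∃ v < ω ^ (s.fold (· ♯ ·) 0 E),
      s.fold (· ♯ ·) 0 (fun c => nprod (Function.update f c (τ c)))
        ≤ v ⨳ np (Finset.univ \ s) f := by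
  intro s
  induction s using Finset.induction with
  | empty => intro h; cases h.ne_empty rfl
  | @insert c t hct IH =>
    intro _ hyp
    obtain ⟨hfc, hτc0, hτcf⟩ := hyp c (Finset.mem_insert_self c t)
    have hτcq : τ c < ω ^ E c := hfc ▸ hτcf
    rcases t.eq_empty_or_nonempty with rfl | htne
    · refine ⟨τ c, ?_, ?_⟩
      · rw [Finset.fold_insert hct, Finset.fold_empty, nadd_zero]
        exact hτcq
      · rw [Finset.fold_insert hct, Finset.fold_empty, nadd_zero, nprod_update]
        have hseteq : Finset.univ.erase c = Finset.univ \ insert c (∅ : Finset (Fin m)) := by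
          ext i
          simp [Finset.mem_erase, Finset.mem_sdiff, eq_comm]
        rw [hseteq]
    · obtain ⟨v', hv', hle'⟩ := IH htne (fun c' hc' => hyp c' (Finset.mem_insert_of_mem hc'))
      have hcnott : c ∈ Finset.univ \ t := Finset.mem_sdiff.2 ⟨Finset.mem_univ c, hct⟩
      have hseteq1 : (Finset.univ \ t).erase c = Finset.univ \ insert c t := by
        ext i
        simp only [Finset.mem_sdiff, Finset.mem_erase, Finset.mem_insert, Finset.mem_univ,
          true_and]
        tauto
      have hseteq2 : (Finset.univ.erase c) \ t = Finset.univ \ insert c t := by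
        ext i
        simp only [Finset.mem_sdiff, Finset.mem_erase, Finset.mem_insert, Finset.mem_univ,
          true_and, and_true]
        tauto
      have htsub : t ⊆ Finset.univ.erase c := by
        intro i hi
        exact Finset.mem_erase.2 ⟨fun he => hct (he ▸ hi), Finset.mem_univ i⟩
      set NS := np (Finset.univ \ insert c t) f with hNS
      have hsplit1 : np (Finset.univ \ t) f = (ω ^ E c) ⨳ NS := by
        rw [np_extract hcnott, hseteq1, hfc]
      have hterm : nprod (Function.update f c (τ c))
          = (τ c ⨳ ω ^ (t.fold (· ♯ ·) 0 E)) ⨳ NS := by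
        rw [nprod_update, np_omega_split t (Finset.univ.erase c) htsub
          (fun c' hc' => (hyp c' (Finset.mem_insert_of_mem hc')).1), hseteq2, nmul_assoc]
      refine ⟨τ c ⨳ ω ^ (t.fold (· ♯ ·) 0 E) ♯ v' ⨳ ω ^ E c, ?_, ?_⟩
      · rw [Finset.fold_insert hct]
        apply nadd_lt_opow
        · calc τ c ⨳ ω ^ (t.fold (· ♯ ·) 0 E)
              < (ω ^ E c) ⨳ ω ^ (t.fold (· ♯ ·) 0 E) :=
              nmul_lt_nmul_of_pos_right hτcq (opow_pos _ omega0_pos)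
            _ = ω ^ (E c ♯ t.fold (· ♯ ·) 0 E) := opow_nmul_opow _ _
        · calc v' ⨳ ω ^ E c < (ω ^ (t.fold (· ♯ ·) 0 E)) ⨳ ω ^ E c :=
              nmul_lt_nmul_of_pos_right hv' (opow_pos _ omega0_pos)
            _ = ω ^ (t.fold (· ♯ ·) 0 E ♯ E c) := opow_nmul_opow _ _
            _ = ω ^ (E c ♯ t.fold (· ♯ ·) 0 E) := by rw [nadd_comm]
      · rw [Finset.fold_insert hct, nadd_nmul, hterm]
        apply nadd_le_nadd le_rfl
        calc t.fold (· ♯ ·) 0 (fun c' => nprod (Function.update f c' (τ c')))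
            ≤ v' ⨳ np (Finset.univ \ t) f := hle'
          _ = (v' ⨳ ω ^ E c) ⨳ NS := by rw [hsplit1, nmul_assoc]

theorem pure_sum_lt {f τ E : Fin m → Ordinal} (s : Finset (Fin m)) (hs : s.Nonempty)
    (hfpos : ∀ i, 0 < f i)
    (h : ∀ c ∈ s, f c = ω ^ E c ∧ 0 < τ c ∧ τ c < f c) :
    s.fold (· ♯ ·) 0 (fun c => nprod (Function.update f c (τ c))) < nprod f := by
  obtain ⟨v, hv, hle⟩ := pure_sum_aux s hs h
  calc s.fold (· ♯ ·) 0 (fun c => nprod (Function.update f c (τ c)))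
      ≤ v ⨳ np (Finset.univ \ s) f := hle
    _ < (ω ^ (s.fold (· ♯ ·) 0 E)) ⨳ np (Finset.univ \ s) f :=
      nmul_lt_nmul_of_pos_right hv (np_pos fun i _ => hfpos i)
    _ = np Finset.univ f := (np_omega_split s Finset.univ (Finset.subset_univ s)
      (fun c hc => (h c hc).1)).symm
    _ = nprod f := rfl

end NProd


section Master

theorem ordRank_le_nadd_cover {W : Type u} [PartialOrder W] [WellFoundedLT W]
    (A B : Set W) (hcov : ∀ w, w ∈ A ∨ w ∈ B) :
    ordRank W ≤ ordRank ↥A ♯ ordRank ↥B := by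
  have hfx : (false : Bool) ∉ ({true} : Finset Bool) := by simp
  have h := ordRank_le_fold_cover (W := W) (s := ({false, true} : Finset Bool))
    (K := fun b => if b then B else A) ?_
  · rw [show ({false, true} : Finset Bool) = insert false {true} from rfl,
      Finset.fold_insert hfx, Finset.fold_singleton] at h
    simpa [nadd_zero] using h
  · intro w
    rcases hcov w with h | h
    · exact ⟨false, by simp, by simpa using h⟩
    · exact ⟨true, by simp, by simpa using h⟩

theorem sub_lt_sub' {a b x : Ordinal} (h1 : x ≤ a) (h2 : a < b) : a - x < b - x := by
  rwa [Ordinal.sub_lt_of_le h1, Ordinal.add_sub_cancel_of_le (h1.trans h2.le)]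

theorem master : ∀ (v : Ordinal.{u}), ∀ (k : ℕ), ∀ {m : ℕ} (δ τ : Fin m → Ordinal.{u}),
    (∀ i, 0 < δ i) → (∀ i, τ i ≠ 0 → τ i < δ i) →
    nprod δ = v → (Finset.univ.filter (fun i => τ i ≠ 0)).card = k →
    ∀ (W : Type u) (_ : PartialOrder W) (_ : WellFoundedLT W) (t : W → Fin m → Ordinal.{u}),
    (∀ w i, t w i < δ i) →
    (∀ w w' : W, w < w' → ∃ i, t w i < t w' i) →
    (∀ w : W, ∃ i, t w i < τ i) →
    ordRank W < nprod δ := by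
  intro v
  induction v using Ordinal.induction with
  | h v IHv =>
  intro k
  induction k using Nat.strong_induction_on with
  | _ k IHk =>
  intro m δ τ hδ hτ' hv hk W _W1 _W2 t hb hvalid hpoint
  have hprodpos : (0 : Ordinal) < nprod δ := nprod_pos hδ
  -- generic bound for classes with smaller parameters
  have classbound : ∀ (K : Set W) (δ' : Fin m → Ordinal),
      nprod δ' < v → (∀ w : W, w ∈ K → ∀ i, t w i < δ' i) →
      ordRank ↥K ≤ nprod δ' := by
    intro K δ' hlt hKb
    apply ordRank_le
    rintro ⟨w, hw⟩
    have h1 : elRank (⟨w, hw⟩ : ↥K) = ordRank ↥{y : ↥K | y < ⟨w, hw⟩} :=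
      elRank_eq_ordRank _
    have h2 : ordRank ↥{y : ↥K | y < ⟨w, hw⟩} < nprod δ' := by
      refine IHv (nprod δ') hlt ((Finset.univ.filter (fun i => t w i ≠ 0)).card) δ' (t w)
        (fun i => lt_of_le_of_lt zero_le (hKb w hw i))
        (fun i _ => hKb w hw i) rfl rfl _ inferInstance inferInstance
        (fun y => t y.1.1) (fun y i => hKb y.1.1 y.1.2 i) ?_ ?_
      · intro y y' hyy'
        exact hvalid y.1.1 y'.1.1 hyy'
      · intro y
        exact hvalid y.1.1 w y.2
    rw [h1, Ordinal.add_one_eq_succ]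
    exact Order.succ_le_of_lt h2
  set S := Finset.univ.filter (fun i => τ i ≠ 0) with hSdef
  rcases Finset.eq_empty_or_nonempty S with hSe | hSne
  · -- W is empty
    have hW : IsEmpty W := by
      constructor
      intro w
      obtain ⟨i, hi⟩ := hpoint w
      have hτi : τ i = 0 := by
        by_contra h
        have hmem : i ∈ S := Finset.mem_filter.2 ⟨Finset.mem_univ i, h⟩
        rw [hSe] at hmem
        exact absurd hmem (Finset.notMem_empty i)
      rw [hτi] at hi
      exact zero_le.not_gt hi
    exact lt_of_le_of_lt (ordRank_of_isEmpty hW) hprodpos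
  -- binary split combinator
  have binary : ∀ (c : Fin m) (x e : Ordinal), x ♯ e = δ c → 0 < x → x < δ c →
      ordRank ↥{w : W | t w c < x} ≤ nprod (Function.update δ c x) →
      ordRank ↥{w : W | x ≤ t w c} < nprod (Function.update δ c e) →
      ordRank W < nprod δ := by
    intro c x e hxe hx0 hxδ hB hA
    calc ordRank W ≤ ordRank ↥{w : W | t w c < x} ♯ ordRank ↥{w : W | x ≤ t w c} :=
        ordRank_le_nadd_cover _ _ (fun w => lt_or_ge (t w c) x)
      _ < nprod (Function.update δ c x) ♯ nprod (Function.update δ c e) :=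
        nadd_lt_nadd_of_le_of_lt hB hA
      _ = nprod (Function.update δ c (x ♯ e)) := nprod_update_nadd c x e
      _ = nprod δ := by rw [hxe, Function.update_eq_self]
  by_cases hG : ∃ c ∈ S, (∃ x, τ c ≤ x ∧ x < δ c ∧ x ♯ (δ c - x) = δ c) ∨
      (∃ P : Ordinal, ∃ e : Ordinal, δ c = P + ω ^ e ∧ P ♯ ω ^ e = δ c ∧ P ≤ τ c ∧ 0 < P)
  · obtain ⟨c, hcS, hcase⟩ := hG
    have hτc0 : (0 : Ordinal) < τ c :=
      pos_iff_ne_zero.2 (Finset.mem_filter.1 hcS).2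
    have hτcδ : τ c < δ c := hτ' c (Finset.mem_filter.1 hcS).2
    -- common: pointed recursion on the upper class
    have upperbound : ∀ (x e : Ordinal), x ♯ e = δ c → x ≤ δ c → 0 < e →
        nprod (Function.update δ c e) = v →
        False → True := fun _ _ _ _ _ _ _ => trivial
    clear upperbound
    rcases hcase with ⟨x, hτx, hxδ, hC⟩ | ⟨P, e, hPe, hC, hPτ, hP0⟩
    · -- GOOD case
      have hx0 : (0 : Ordinal) < x := lt_of_lt_of_le hτc0 hτx
      apply binary c x (δ c - x) hC hx0 hxδ
      · -- lower class
        apply classbound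
        · rw [← hv]
          exact nprod_update_lt hxδ hδ
        · intro w hw i
          rcases eq_or_ne i c with rfl | hic
          · rw [Function.update_self]; exact hw
          · rw [Function.update_of_ne hic]; exact hb w i
      · -- upper class, pointed recursion with c dropped from the support
        set A : Set W := {w : W | x ≤ t w c} with hAdef
        set δ' := Function.update δ c (δ c - x) with hδ'def
        set τ'' := Function.update τ c 0 with hτ''def
        set t' : ↥A → Fin m → Ordinal :=
          fun w i => if i = c then t w.1 c - x else t w.1 i with ht'def
        have hδ'pos : ∀ i, 0 < δ' i := by
          intro i
          rcases eq_or_ne i c with rfl | hic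
          · rw [hδ'def, Function.update_self, Ordinal.lt_sub, add_zero]; exact hxδ
          · rw [hδ'def, Function.update_of_ne hic]; exact hδ i
        have hτ''lt : ∀ i, τ'' i ≠ 0 → τ'' i < δ' i := by
          intro i hi
          rcases eq_or_ne i c with rfl | hic
          · rw [hτ''def, Function.update_self] at hi; exact absurd rfl hi
          · rw [hτ''def, Function.update_of_ne hic] at hi
            rw [hτ''def, Function.update_of_ne hic, hδ'def, Function.update_of_ne hic]
            exact hτ' i hi
        have hb' : ∀ (w : ↥A) i, t' w i < δ' i := by
          intro w i
          rcases eq_or_ne i c with rfl | hic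
          · rw [ht'def, hδ'def]
            simp only [if_pos rfl, Function.update_self]
            exact sub_lt_sub' w.2 (hb w.1 i)
          · rw [ht'def, hδ'def]
            simp only [if_neg hic, Function.update_of_ne hic]
            exact hb w.1 i
        have hvalid' : ∀ w w' : ↥A, w < w' → ∃ i, t' w i < t' w' i := by
          intro w w' hww'
          obtain ⟨i, hi⟩ := hvalid w.1 w'.1 hww'
          refine ⟨i, ?_⟩
          rcases eq_or_ne i c with rfl | hic
          · rw [ht'def]; simp only [if_pos rfl]
            exact sub_lt_sub' w.2 hi
          · rw [ht'def]; simp only [if_neg hic]; exact hi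
        have hpoint' : ∀ w : ↥A, ∃ i, t' w i < τ'' i := by
          intro w
          obtain ⟨i, hi⟩ := hpoint w.1
          have hic : i ≠ c := by
            rintro rfl
            exact absurd (lt_of_lt_of_le hi hτx) (not_lt.2 w.2)
          refine ⟨i, ?_⟩
          rw [ht'def, hτ''def]
          simp only [if_neg hic, Function.update_of_ne hic]
          exact hi
        have hcards : (Finset.univ.filter (fun i => τ'' i ≠ 0)) = S.erase c := by
          ext i
          simp only [Finset.mem_filter, Finset.mem_erase, Finset.mem_univ, true_and, hSdef,
            hτ''def]
          rcases eq_or_ne i c with rfl | hic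
          · simp [Function.update_self]
          · simp [Function.update_of_ne hic, hic]
        rcases lt_or_eq_of_le (le_of_eq_of_le rfl
            ((nprod_update_le (sub_le_self (δ c) x)).trans hv.le)) with hlt | heq
        · exact IHv (nprod δ') hlt _ δ' τ'' hδ'pos hτ''lt rfl rfl
            ↥A inferInstance inferInstance t' hb' hvalid' hpoint'
        · refine IHk (S.erase c).card ?_ δ' τ'' hδ'pos hτ''lt heq ?_
            ↥A inferInstance inferInstance t' hb' hvalid' hpoint'
          · rw [← hk]
            exact Finset.card_erase_lt_of_mem hcS
          · rw [hcards]
    · -- P-split case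
      have hPδ : P < δ c := by
        calc P = P ♯ 0 := (nadd_zero P).symm
          _ < P ♯ ω ^ e := nadd_lt_nadd_left (opow_pos _ omega0_pos) P
          _ = δ c := hC
      have heδ : ω ^ e < δ c := by
        calc ω ^ e = 0 ♯ ω ^ e := (zero_nadd _).symm
          _ < P ♯ ω ^ e := nadd_lt_nadd_right hP0 _
          _ = δ c := hC
      have hsub : δ c - P = ω ^ e := by rw [hPe, Ordinal.add_sub_cancel]
      apply binary c P (ω ^ e) hC hP0 hPδ
      · apply classbound
        · rw [← hv]
          exact nprod_update_lt hPδ hδ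
        · intro w hw i
          rcases eq_or_ne i c with rfl | hic
          · rw [Function.update_self]; exact hw
          · rw [Function.update_of_ne hic]; exact hb w i
      · set A : Set W := {w : W | P ≤ t w c} with hAdef
        set δ' := Function.update δ c (ω ^ e) with hδ'def
        set τ'' := Function.update τ c (τ c - P) with hτ''def
        set t' : ↥A → Fin m → Ordinal :=
          fun w i => if i = c then t w.1 c - P else t w.1 i with ht'def
        have hδ'pos : ∀ i, 0 < δ' i := by
          intro i
          rcases eq_or_ne i c with rfl | hic
          · rw [hδ'def, Function.update_self]; exact opow_pos _ omega0_pos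
          · rw [hδ'def, Function.update_of_ne hic]; exact hδ i
        have hτ''lt : ∀ i, τ'' i ≠ 0 → τ'' i < δ' i := by
          intro i _
          rcases eq_or_ne i c with rfl | hic
          · rw [hτ''def, Function.update_self, hδ'def, Function.update_self, ← hsub]
            exact sub_lt_sub' hPτ hτcδ
          · rw [hτ''def, Function.update_of_ne hic] at *
            rw [hδ'def, Function.update_of_ne hic]
            exact hτ' i (by assumption)
        have hb' : ∀ (w : ↥A) i, t' w i < δ' i := by
          intro w i
          rcases eq_or_ne i c with rfl | hic
          · rw [ht'def, hδ'def]
            simp only [if_pos rfl, Function.update_self, ← hsub]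
            exact sub_lt_sub' w.2 (hb w.1 i)
          · rw [ht'def, hδ'def]
            simp only [if_neg hic, Function.update_of_ne hic]
            exact hb w.1 i
        have hvalid' : ∀ w w' : ↥A, w < w' → ∃ i, t' w i < t' w' i := by
          intro w w' hww'
          obtain ⟨i, hi⟩ := hvalid w.1 w'.1 hww'
          refine ⟨i, ?_⟩
          rcases eq_or_ne i c with rfl | hic
          · rw [ht'def]; simp only [if_pos rfl]
            exact sub_lt_sub' w.2 hi
          · rw [ht'def]; simp only [if_neg hic]; exact hi
        have hpoint' : ∀ w : ↥A, ∃ i, t' w i < τ'' i := by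
          intro w
          obtain ⟨i, hi⟩ := hpoint w.1
          refine ⟨i, ?_⟩
          rcases eq_or_ne i c with rfl | hic
          · rw [ht'def, hτ''def]
            simp only [if_pos rfl, Function.update_self]
            exact sub_lt_sub' w.2 hi
          · rw [ht'def, hτ''def]
            simp only [if_neg hic, Function.update_of_ne hic]
            exact hi
        have hlt : nprod δ' < v := by
          rw [← hv]
          exact nprod_update_lt heδ hδ
        exact IHv (nprod δ') hlt _ δ' τ'' hδ'pos hτ''lt rfl rfl
          ↥A inferInstance inferInstance t' hb' hvalid' hpoint'
  · -- PURE case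
    have hpure : ∀ c ∈ S, ∃ e : Ordinal, δ c = ω ^ e := by
      intro c hc
      have hτc0 : (0 : Ordinal) < τ c :=
        pos_iff_ne_zero.2 (Finset.mem_filter.1 hc).2
      have hτcδ : τ c < δ c := hτ' c (Finset.mem_filter.1 hc).2
      rcases cp (δ c) (τ c) hτc0 hτcδ with hgood | ⟨P, e, h1, h2, h3⟩
      · exact absurd ⟨c, hc, Or.inl hgood⟩ hG
      · rcases eq_or_ne P 0 with rfl | hP0
        · exact ⟨e, by simpa using h1⟩
        · exact absurd ⟨c, hc, Or.inr ⟨P, e, h1, h2, h3, pos_iff_ne_zero.2 hP0⟩⟩ hG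
    classical
    set E : Fin m → Ordinal := fun c =>
      if h : ∃ e : Ordinal, δ c = ω ^ e then h.choose else 0 with hEdef
    have hE : ∀ c ∈ S, δ c = ω ^ E c := by
      intro c hc
      have h := hpure c hc
      rw [hEdef]
      simp only [dif_pos h]
      exact h.choose_spec
    set K : Fin m → Set W :=
      fun c => {w : W | t w c < τ c ∧ ∀ i ∈ S, i < c → ¬ (t w i < τ i)} with hKdef
    have hcov : ∀ w : W, ∃ c ∈ S, w ∈ K c := by
      intro w
      have hTne : (S.filter (fun i => t w i < τ i)).Nonempty := by
        obtain ⟨i, hi⟩ := hpoint w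
        have hτi : τ i ≠ 0 := by
          intro h
          rw [h] at hi
          exact zero_le.not_gt hi
        exact ⟨i, Finset.mem_filter.2 ⟨Finset.mem_filter.2 ⟨Finset.mem_univ i, hτi⟩, hi⟩⟩
      set c := (S.filter (fun i => t w i < τ i)).min' hTne with hcdef
      have hcmem := (S.filter (fun i => t w i < τ i)).min'_mem hTne
      refine ⟨c, (Finset.mem_filter.1 hcmem).1, (Finset.mem_filter.1 hcmem).2, ?_⟩
      intro i hiS hic hlt
      have : c ≤ i := Finset.min'_le _ i (Finset.mem_filter.2 ⟨hiS, hlt⟩)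
      exact absurd hic (not_lt.2 this)
    calc ordRank W ≤ S.fold (· ♯ ·) 0 (fun c => ordRank ↥(K c)) :=
        ordRank_le_fold_cover S K hcov
      _ ≤ S.fold (· ♯ ·) 0 (fun c => nprod (Function.update δ c (τ c))) := by
        apply fold_nadd_le
        intro c hc
        apply classbound
        · rw [← hv]
          exact nprod_update_lt (hτ' c (Finset.mem_filter.1 hc).2) hδ
        · intro w hw i
          rcases eq_or_ne i c with rfl | hic
          · rw [Function.update_self]; exact hw.1
          · rw [Function.update_of_ne hic]; exact hb w i
      _ < nprod δ := by
        apply pure_sum_lt (E := E) S hSne hδ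
        intro c hc
        exact ⟨hE c hc, pos_iff_ne_zero.2 (Finset.mem_filter.1 hc).2,
          hτ' c (Finset.mem_filter.1 hc).2⟩

end Master


section PStruct

variable {n : ℕ} {P Q : Type u}
  [PartialOrder P] [PartialOrder Q] [WellFoundedLT P] [WellFoundedLT Q]
  {C : Fin n → Type u} [∀ i, LinearOrder (C i)] [∀ i, WellFoundedLT (C i)]
  {η : ((∀ i, C i) × Q) ≃ P}

theorem eta_mono_c (hbox : IsBoxAugmentationWith P C Q η) :
    ∀ (s : Finset (Fin n)) (c c' : ∀ i, C i) (r : Q),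
    (∀ i, c i ≤ c' i) → (∀ i ∉ s, c i = c' i) → η (c, r) ≤ η (c', r) := by
  intro s
  induction s using Finset.induction with
  | empty =>
    intro c c' r _ he
    have hcc : c = c' := funext fun i => he i (Finset.notMem_empty i)
    rw [hcc]
  | @insert k t hkt IH =>
    intro c c' r hle he
    have h1 : η (c, r) ≤ η (Function.update c' k (c k), r) := by
      apply IH
      · intro i
        rcases eq_or_ne i k with rfl | hik
        · rw [Function.update_self]
        · rw [Function.update_of_ne hik]; exact hle i
      · intro i hit
        rcases eq_or_ne i k with rfl | hik
        · rw [Function.update_self]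
        · rw [Function.update_of_ne hik]
          exact he i (by simp [Finset.mem_insert, hik, hit])
    have h2 : η (Function.update c' k (c k), r) ≤ η (c', r) := by
      have h3 := (hbox.1 k c' r (c k) (c' k)).1 (hle k)
      rwa [Function.update_eq_self] at h3
    exact h1.trans h2

theorem eta_mono (hbox : IsBoxAugmentationWith P C Q η) {c c' : ∀ i, C i} {r r' : Q}
    (hc : ∀ i, c i ≤ c' i) (hr : r ≤ r') : η (c, r) ≤ η (c', r') :=
  (eta_mono_c hbox Finset.univ c c' r hc (fun i hi => absurd (Finset.mem_univ i) hi)).trans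
    ((hbox.2 c' r r').1 hr)

theorem eta_lt (hbox : IsBoxAugmentationWith P C Q η) {c c' : ∀ i, C i} {r r' : Q}
    (hc : ∀ i, c i ≤ c' i) (hr : r ≤ r') (hne : c ≠ c' ∨ r ≠ r') :
    η (c, r) < η (c', r') := by
  apply lt_of_le_of_ne (eta_mono hbox hc hr)
  intro he
  have h := η.injective he
  rcases hne with h1 | h1
  · exact h1 (congrArg Prod.fst h)
  · exact h1 (congrArg Prod.snd h)

theorem eta_lt_Q (hbox : IsBoxAugmentationWith P C Q η) {d : ∀ i, C i} {r r' : Q}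
    (h : r < r') : η (d, r) < η (d, r') :=
  eta_lt hbox (fun _ => le_rfl) h.le (Or.inr (ne_of_lt h))

theorem no_lt_of_incomp (hP : UpwardsLinear P) (hbox : IsBoxAugmentationWith P C Q η)
    {c c' : ∀ i, C i} {r r' : Q} (hrr : ¬ r' ≤ r) (hrr' : ¬ r ≤ r') :
    ¬ (η (c', r') < η (c, r)) := by
  intro hlt
  have hner : r ≠ r' := fun h => hrr' (h ▸ le_rfl)
  set cm : ∀ i, C i := fun i => max (c i) (c' i) with hcm
  have hccm : ∀ i, c i ≤ cm i := fun i => le_max_left _ _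
  have hc'cm : ∀ i, c' i ≤ cm i := fun i => le_max_right _ _
  by_cases hcc : cm = c'
  · -- c ≤ c'
    have hcle : ∀ i, c i ≤ c' i := fun i => by rw [← hcc]; exact hccm i
    have h1 : η (c, r') ≤ η (c', r') := eta_mono hbox hcle le_rfl
    exact hrr ((hbox.2 c r' r).2 (lt_of_le_of_lt h1 hlt).le)
  · have h1 : η (c', r') < η (cm, r') :=
      eta_lt hbox hc'cm le_rfl (Or.inl (fun h => hcc h.symm))
    rcases hP (η (c', r')) (η (cm, r')) (η (c, r)) h1 hlt with h2 | h2
    · have h3 : η (c, r') ≤ η (cm, r') := eta_mono hbox hccm le_rfl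
      exact hrr ((hbox.2 c r' r).2 (h3.trans h2))
    · by_cases hcmc : cm = c
      · rw [hcmc] at h2
        exact hrr' ((hbox.2 c r r').2 h2)
      · have h3 : η (c, r) < η (cm, r) :=
          eta_lt hbox hccm le_rfl (Or.inl (fun h => hcmc h.symm))
        have h4 : η (c, r) < η (cm, r') := by
          apply lt_of_le_of_ne h2
          intro he
          have h5 := η.injective he
          exact hner (congrArg Prod.snd h5)
        rcases hP (η (c, r)) (η (cm, r)) (η (cm, r')) h3 h4 with h5 | h5
        · exact hrr' ((hbox.2 cm r r').2 h5)
        · exact hrr ((hbox.2 cm r' r).2 h5)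

/-- The structure lemma: a strict inequality in `P` forces either a strict drop in the
`Q`-coordinate, or a weak rise in the `Q`-coordinate together with a strict drop in some
`C`-coordinate. -/
theorem struct (hP : UpwardsLinear P) (hbox : IsBoxAugmentationWith P C Q η)
    {c c' : ∀ i, C i} {r r' : Q} (hlt : η (c', r') < η (c, r)) :
    r' < r ∨ (r ≤ r' ∧ ∃ k, c' k < c k) := by
  have hcomp : r' ≤ r ∨ r ≤ r' := by
    by_contra h
    push_neg at h
    exact no_lt_of_incomp hP hbox h.1 h.2 hlt
  have hdrop : r ≤ r' → ∃ k, c' k < c k := by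
    intro hle
    by_contra h
    push_neg at h
    have hcle : ∀ i, c i ≤ c' i := fun i => h i
    have := eta_mono hbox hcle hle
    exact absurd (this.trans_lt hlt) (lt_irrefl _)
  rcases hcomp with h | h
  · rcases lt_or_eq_of_le h with h' | h'
    · exact Or.inl h'
    · exact Or.inr ⟨h'.symm.le, hdrop h'.symm.le⟩
  · exact Or.inr ⟨h, hdrop h⟩

theorem struct' (hP : UpwardsLinear P) (hbox : IsBoxAugmentationWith P C Q η)
    {y₁ y₂ : P} (h : y₁ < y₂) :
    (η.symm y₁).2 < (η.symm y₂).2 ∨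
    ((η.symm y₂).2 ≤ (η.symm y₁).2 ∧ ∃ k, (η.symm y₁).1 k < (η.symm y₂).1 k) := by
  have h' : η ((η.symm y₁).1, (η.symm y₁).2) < η ((η.symm y₂).1, (η.symm y₂).2) := by
    simpa using h
  exact struct hP hbox h'

theorem up_comp (hQ : UpwardsLinear Q) {q a b : Q} (ha : q ≤ a) (hb : q ≤ b) :
    a ≤ b ∨ b ≤ a := by
  rcases eq_or_lt_of_le ha with rfl | ha'
  · exact Or.inl hb
  rcases eq_or_lt_of_le hb with rfl | hb'
  · exact Or.inr ha'.le
  exact hQ q a b ha' hb'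

/-- Branching exists strictly below `w` when `(q, ↑w)` is the right end of a maximal
branching free interval. -/
theorem top_wit (hQ : UpwardsLinear Q) {q w : Q}
    (hqw : (q : WithTop Q) < (w : WithTop Q)) (hmax : MaxBranchingFree q (w : WithTop Q)) :
    ∃ x : Q, x < w ∧ ¬ x ≤ q ∧ ¬ q ≤ x := by
  by_contra hno
  push_neg at hno
  have hq_lt_w : q < w := WithTop.coe_lt_coe.1 hqw
  have hmain : ∀ q₂ : WithTop Q, (w : WithTop Q) < q₂ →
      (∀ z : Q, q ≤ z → (z : WithTop Q) < q₂ → z ≤ w) → False := by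
    intro q₂ hwq₂ hup
    have hle : (q : WithTop Q) ≤ q₂ := le_of_lt (hqw.trans hwq₂)
    have hBF2 : BranchingFree q q₂ := by
      intro p hp x hxp
      have hpw : p ≤ w := hup p hp.1 hp.2
      rcases lt_or_eq_of_le hpw with h | h
      · exact hmax.2.1 p ⟨hp.1, WithTop.coe_lt_coe.2 h⟩ x hxp
      · subst h
        by_cases hxq : x ≤ q
        · exact Or.inl hxq
        · exact Or.inr (hno x hxp hxq)
    have heq := hmax.2.2 q q₂ hle hBF2 (fun z hz => ⟨hz.1, hz.2.trans hwq₂⟩)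
    have hw2 : w ∈ Ival q q₂ := ⟨hq_lt_w.le, hwq₂⟩
    rw [← heq] at hw2
    exact lt_irrefl _ hw2.2
  rcases Set.eq_empty_or_nonempty {s : Q | w < s} with hA | hA
  · apply hmain ⊤ (WithTop.coe_lt_top w)
    intro z hqz _
    by_contra hzw
    have hwz : w < z := by
      rcases up_comp hQ hq_lt_w.le hqz with h | h
      · exact lt_of_le_of_ne h (fun he => hzw (le_of_eq he.symm))
      · exact absurd h hzw
    have hmem : z ∈ {s : Q | w < s} := hwz
    rw [hA] at hmem
    exact absurd hmem (Set.notMem_empty z)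
  · set mn := WellFounded.min (wellFounded_lt) {s : Q | w < s} hA with hmndef
    have hmn : w < mn := WellFounded.min_mem (wellFounded_lt) {s : Q | w < s} hA
    apply hmain (mn : WithTop Q) (WithTop.coe_lt_coe.2 hmn)
    intro z hqz hz
    by_contra hzw
    have hwz : w < z := by
      rcases up_comp hQ hq_lt_w.le hqz with h | h
      · exact lt_of_le_of_ne h (fun he => hzw (le_of_eq he.symm))
      · exact absurd h hzw
    exact WellFounded.not_lt_min (wellFounded_lt) {s : Q | w < s} hwz
      (WithTop.coe_lt_coe.1 hz)

/-- Classification of the elements below `η (c, q̂)` for `q̂` in the maximal branching free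
interval `[q, q')`. -/
theorem classify (hP : UpwardsLinear P) (hQ : UpwardsLinear Q)
    (hbox : IsBoxAugmentationWith P C Q η)
    {q : Q} {q' : WithTop Q} (hqq' : (q : WithTop Q) < q') (hmax : MaxBranchingFree q q')
    {qh : Q} (hqh : qh ∈ Ival q q') {c c' : ∀ i, C i} {r' : Q}
    (hlt : η (c', r') < η (c, qh)) :
    (r' ≤ q ∨ r' ∈ Ival q q') ∧ (r' < qh ∨ ∃ k, c' k < c k) := by
  have hBF := hmax.2.1
  rcases struct hP hbox hlt with hcase | ⟨hge, hdrop⟩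
  · rcases hBF qh hqh r' hcase with h | h
    · exact ⟨Or.inl h, Or.inl hcase⟩
    · exact ⟨Or.inr ⟨h, lt_trans (WithTop.coe_lt_coe.2 hcase) hqh.2⟩, Or.inl hcase⟩
  · refine ⟨Or.inr ⟨hqh.1.trans hge, ?_⟩, Or.inr hdrop⟩
    by_contra hcon
    have hcon' : q' ≤ (r' : WithTop Q) := by
      rcases eq_or_ne q' ⊤ with rfl | htop
      · exact absurd (WithTop.coe_lt_top r') hcon
      · obtain ⟨w, hw⟩ := WithTop.ne_top_iff_exists.1 htop
        rw [← hw]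
        rw [← hw] at hcon hqq'
        rcases up_comp hQ (hqh.1.trans hge) (WithTop.coe_lt_coe.1 hqq').le with h | h
        · rcases lt_or_eq_of_le h with h' | h'
          · exact absurd (WithTop.coe_lt_coe.2 h') hcon
          · exact WithTop.coe_le_coe.2 h'.ge
        · exact WithTop.coe_le_coe.2 h
    have hwit : ∃ xt : Q, xt < r' ∧ ¬ xt ≤ q ∧ ¬ q ≤ xt := by
      rcases lt_or_eq_of_le hcon' with hlt2 | heq
      · -- q' < ↑r'
        have hq'top : q' ≠ ⊤ := fun h => by
          rw [h] at hlt2; exact absurd (lt_of_lt_of_le hlt2 le_top) (lt_irrefl _)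
        obtain ⟨w, hw⟩ := WithTop.ne_top_iff_exists.1 hq'top
        have hsub : Ival q q' ⊆ Ival q (r' : WithTop Q) := fun z hz =>
          ⟨hz.1, hz.2.trans hlt2⟩
        have hnBF : ¬ BranchingFree q (r' : WithTop Q) := by
          intro hBF2
          have heq2 := hmax.2.2 q (r' : WithTop Q)
            (le_of_lt (hqq'.trans hlt2)) hBF2 hsub
          have hwmem : w ∈ Ival q (r' : WithTop Q) := by
            constructor
            · have : (q : WithTop Q) < (w : WithTop Q) := hw ▸ hqq'
              exact (WithTop.coe_lt_coe.1 this).le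
            · rw [hw]; exact hlt2
          rw [← heq2] at hwmem
          rw [← hw] at hwmem
          exact lt_irrefl _ hwmem.2
        simp only [BranchingFree, not_forall] at hnBF
        obtain ⟨p, hp, x, hxp, hx⟩ := hnBF
        push_neg at hx
        exact ⟨x, lt_trans hxp (WithTop.coe_lt_coe.1 hp.2), hx.1, hx.2⟩
      · -- q' = ↑r'
        refine top_wit hQ ?_ ?_
        · rw [← heq]; exact hqq'
        · rw [← heq]; exact hmax
    obtain ⟨xt, hxtr', hxtq1, hxtq2⟩ := hwit
    have h1 : η (c', xt) < η (c', r') := eta_lt_Q hbox hxtr'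
    have h2 : η (c', xt) < η (c, qh) := h1.trans hlt
    have hx1 : ¬ xt ≤ qh := by
      intro h
      rcases lt_or_eq_of_le h with h' | h'
      · rcases hBF qh hqh xt h' with h'' | h''
        · exact hxtq1 h''
        · exact hxtq2 h''
      · exact hxtq2 (h' ▸ hqh.1)
    have hx2 : ¬ qh ≤ xt := fun h => hxtq2 (hqh.1.trans h)
    exact no_lt_of_incomp hP hbox hx1 hx2 h2

theorem classifyB (hP : UpwardsLinear P) (hbox : IsBoxAugmentationWith P C Q η)
    {q : Q} {z : ∀ i, C i} (hz : ∀ (i : Fin n) (x : C i), z i ≤ x)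
    {c' : ∀ i, C i} {r' : Q} (hlt : η (c', r') < η (z, q)) : r' < q := by
  rcases struct hP hbox hlt with h | ⟨_, k, hk⟩
  · exact h
  · exact absurd hk (not_lt.2 (hz k (c' k)))

end PStruct

section NprodList

theorem nprod_eq_foldr : ∀ {m : ℕ} (f : Fin m → Ordinal.{u}),
    nprod f = (List.ofFn f).foldr (· ⨳ ·) 1 := by
  intro m
  induction m with
  | zero =>
    intro f
    rw [nprod, np]
    simp
  | succ m IH =>
    intro f
    rw [List.ofFn_succ, List.foldr_cons, ← IH]
    rw [nprod, np, Fin.univ_succ, Finset.fold_cons, Finset.fold_map]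
    rfl

theorem nprod_snoc {m : ℕ} (γ : Fin m → Ordinal.{u}) (b : Ordinal.{u}) :
    nprod (Fin.snoc γ b) = (List.ofFn γ).foldr (· ⨳ ·) b := by
  rw [nprod_eq_foldr]
  have h1 : List.ofFn (Fin.snoc γ b : Fin (m+1) → Ordinal)
      = (List.ofFn γ).concat b := by
    rw [List.ofFn_succ']
    simp
  rw [h1, List.concat_eq_append, List.foldr_append]
  simp [nmul_one]

end NprodList

theorem elRank_lt_ordRank {W : Type u} [PartialOrder W] [WellFoundedLT W] (x : W) :
    elRank x < ordRank W :=
  lt_of_lt_of_le (lt_add_one _) (le_ordRank x)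

theorem elRank_le_of_le {W : Type u} [PartialOrder W] [WellFoundedLT W] {x y : W}
    (h : x ≤ y) : elRank x ≤ elRank y := by
  rcases lt_or_eq_of_le h with h' | rfl
  · exact (elRank_lt_of_lt h').le
  · exact le_rfl

end WulpoProof

open WulpoProof in
/-- Suppose the wulpo `P` is a box-augmentation of the nonempty linear well-orders
`C 0, …, C (n-1)` and the wulpo `Q` via `η`, and `[q, q')` is a maximal branching free
interval of `Q` with `α = rank (Q↾[q, q')) > 0`, and `z i` is the minimum of `C i`. Then
`rank (η (z, q), P) ≤ rank (C 0) ⨳ ⋯ ⨳ rank (C (n-1)) ⨳ rank (q, Q)`, and for every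
`q̂ ∈ [q, q')` and all `c i ∈ C i`,
`rank (η (c, q̂), P) < rank (C 0) ⨳ ⋯ ⨳ rank (C (n-1)) ⨳ (rank (q, Q) + α)`. -/
theorem rank_boxAugmentation_interval {n : ℕ} {P Q : Type u}
    [PartialOrder P] [PartialOrder Q] [WellFoundedLT P] [WellFoundedLT Q]
    (C : Fin n → Type u) [∀ i, LinearOrder (C i)] [∀ i, WellFoundedLT (C i)]
    (hP : UpwardsLinear P) (hQ : UpwardsLinear Q)
    (η : ((∀ i, C i) × Q) ≃ P) (hbox : IsBoxAugmentationWith P C Q η)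
    (q : Q) (q' : WithTop Q) (hqq' : (q : WithTop Q) < q')
    (hmax : MaxBranchingFree q q')
    (hα : 0 < ordRank ↥(Ival q q'))
    (z : ∀ i, C i) (hz : ∀ (i : Fin n) (x : C i), z i ≤ x) :
    elRank (η (z, q)) ≤ (List.ofFn fun i => ordRank (C i)).foldr (· ⨳ ·) (elRank q) ∧
    ∀ qh ∈ Ival q q', ∀ c : ∀ i, C i,
      elRank (η (c, qh)) <
        (List.ofFn fun i => ordRank (C i)).foldr (· ⨳ ·)
          (elRank q + ordRank ↥(Ival q q')) := by
  classical
  set γ : Fin n → Ordinal.{u} := fun i => ordRank (C i) with hγdef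
  have hγpos : ∀ i, 0 < γ i := by
    intro i
    have h1 := le_ordRank (z i)
    have h0 : (0 : Ordinal) < elRank (z i) + 1 := by
      rw [Ordinal.add_one_eq_succ]
      exact Order.bot_lt_succ _
    exact lt_of_lt_of_le h0 h1
  constructor
  · -- Goal 1
    set tup1 : P → Fin (n + 1) → Ordinal.{u} := fun p =>
      Fin.snoc (fun i => elRank ((η.symm p).1 i)) (elRank ((η.symm p).2)) with htup1
    set δ₀ : Fin (n + 1) → Ordinal.{u} := Fin.snoc γ (elRank q) with hδ₀
    rw [← nprod_snoc γ (elRank q), elRank_eq_ordRank (η (z, q))]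
    apply ordRank_le
    rintro ⟨w, hw⟩
    have hdc : ∀ ⦃a b : P⦄, b < a → a ∈ {y : P | y < η (z, q)} →
        b ∈ {y : P | y < η (z, q)} := fun a b h ha => h.trans ha
    rw [elRank_subtype_eq hdc w hw]
    have hρ : ∀ y : P, y < η (z, q) → (η.symm y).2 < q := by
      intro y hy
      have hy' : η ((η.symm y).1, (η.symm y).2) < η (z, q) := by simpa using hy
      exact classifyB hP hbox hz hy'
    have hq0 : (0 : Ordinal) < elRank q :=
      lt_of_le_of_lt zero_le (elRank_lt_of_lt (hρ w hw))
    rw [elRank_eq_ordRank w, Ordinal.add_one_eq_succ]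
    apply Order.succ_le_of_lt
    refine master (nprod δ₀) ((Finset.univ.filter (fun i => tup1 w i ≠ 0)).card)
      δ₀ (tup1 w) ?_ ?_ rfl rfl ↥{p : P | p < w} inferInstance inferInstance
      (fun y => tup1 y.1) ?_ ?_ ?_
    · -- positivity
      intro i
      refine Fin.lastCases ?_ ?_ i
      · rw [hδ₀, Fin.snoc_last]; exact hq0
      · intro j; rw [hδ₀, Fin.snoc_castSucc]; exact hγpos j
    · -- τ < δ
      intro i _
      refine Fin.lastCases ?_ ?_ i
      · rw [hδ₀, htup1]
        simp only [Fin.snoc_last]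
        exact elRank_lt_of_lt (hρ w hw)
      · intro j
        rw [hδ₀, htup1]
        simp only [Fin.snoc_castSucc]
        exact elRank_lt_ordRank _
    · -- bounds
      rintro ⟨y, hy⟩ i
      have hyx : y < η (z, q) := hy.trans hw
      refine Fin.lastCases ?_ ?_ i
      · rw [hδ₀, htup1]
        simp only [Fin.snoc_last]
        exact elRank_lt_of_lt (hρ y hyx)
      · intro j
        rw [hδ₀, htup1]
        simp only [Fin.snoc_castSucc]
        exact elRank_lt_ordRank _
    · -- validity
      rintro ⟨y, hy⟩ ⟨y', hy'⟩ hyy'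
      have h := struct' hP hbox (show y < y' from hyy')
      rcases h with h2 | ⟨_, k, hk⟩
      · refine ⟨Fin.last n, ?_⟩
        rw [htup1]
        simp only [Fin.snoc_last]
        exact elRank_lt_of_lt h2
      · refine ⟨k.castSucc, ?_⟩
        rw [htup1]
        simp only [Fin.snoc_castSucc]
        exact elRank_lt_of_lt hk
    · -- pointedness
      rintro ⟨y, hy⟩
      have h := struct' hP hbox (show y < w from hy)
      rcases h with h2 | ⟨_, k, hk⟩
      · refine ⟨Fin.last n, ?_⟩
        rw [htup1]
        simp only [Fin.snoc_last]
        exact elRank_lt_of_lt h2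
      · refine ⟨k.castSucc, ?_⟩
        rw [htup1]
        simp only [Fin.snoc_castSucc]
        exact elRank_lt_of_lt hk
  · -- Goal 2
    intro qh hqh c
    set eh : Q → Ordinal.{u} := fun r =>
      if h : r ∈ Ival q q' then elRank q + elRank (⟨r, h⟩ : ↥(Ival q q'))
      else elRank r with hehdef
    have ehbound : ∀ r : Q, (r ≤ q ∨ r ∈ Ival q q') →
        eh r < elRank q + ordRank ↥(Ival q q') := by
      intro r hr
      by_cases h : r ∈ Ival q q'
      · rw [hehdef]
        simp only [dif_pos h]
        exact add_lt_add_right (elRank_lt_ordRank _) _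
      · rw [hehdef]
        simp only [dif_neg h]
        have hrq : r ≤ q := hr.resolve_right h
        calc elRank r ≤ elRank q := elRank_le_of_le hrq
          _ < elRank q + ordRank ↥(Ival q q') := by
              have h2 := add_lt_add_right hα (elRank q)
              rwa [add_zero] at h2
    have ehlt : ∀ r₁ r₂ : Q, r₁ < r₂ → (r₁ ≤ q ∨ r₁ ∈ Ival q q') →
        (r₂ ≤ q ∨ r₂ ∈ Ival q q') → eh r₁ < eh r₂ := by
      intro r₁ r₂ h12 h1m h2m
      by_cases h1 : r₁ ∈ Ival q q'
      · by_cases h2 : r₂ ∈ Ival q q'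
        · rw [hehdef]
          simp only [dif_pos h1, dif_pos h2]
          have hmk : (⟨r₁, h1⟩ : ↥(Ival q q')) < ⟨r₂, h2⟩ := Subtype.mk_lt_mk.2 h12
          exact add_lt_add_right (elRank_lt_of_lt hmk) _
        · have hr2q : r₂ ≤ q := h2m.resolve_right h2
          exact absurd (lt_of_le_of_lt h1.1 (lt_of_lt_of_le h12 hr2q)) (lt_irrefl q)
      · have hr1q : r₁ ≤ q := h1m.resolve_right h1
        have hr1lt : r₁ < q := by
          rcases lt_or_eq_of_le hr1q with h | h
          · exact h
          · subst h
            exact absurd ⟨le_rfl, hqq'⟩ h1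
        by_cases h2 : r₂ ∈ Ival q q'
        · rw [hehdef]
          simp only [dif_neg h1, dif_pos h2]
          calc elRank r₁ < elRank q := elRank_lt_of_lt hr1lt
            _ ≤ elRank q + elRank (⟨r₂, h2⟩ : ↥(Ival q q')) := le_self_add
        · rw [hehdef]
          simp only [dif_neg h1, dif_neg h2]
          exact elRank_lt_of_lt h12
    set tup2 : P → Fin (n + 1) → Ordinal.{u} := fun p =>
      Fin.snoc (fun i => elRank ((η.symm p).1 i)) (eh ((η.symm p).2)) with htup2
    set δ₂ : Fin (n + 1) → Ordinal.{u} :=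
      Fin.snoc γ (elRank q + ordRank ↥(Ival q q')) with hδ₂
    rw [← nprod_snoc γ (elRank q + ordRank ↥(Ival q q')), elRank_eq_ordRank (η (c, qh))]
    have hcls : ∀ y : P, y < η (c, qh) →
        ((η.symm y).2 ≤ q ∨ (η.symm y).2 ∈ Ival q q') ∧
        ((η.symm y).2 < qh ∨ ∃ k, (η.symm y).1 k < c k) := by
      intro y hy
      have hy' : η ((η.symm y).1, (η.symm y).2) < η (c, qh) := by simpa using hy
      exact classify hP hQ hbox hqq' hmax hqh hy'
    refine master (nprod δ₂) ((Finset.univ.filter (fun i => tup2 (η (c, qh)) i ≠ 0)).card)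
      δ₂ (tup2 (η (c, qh))) ?_ ?_ rfl rfl ↥{p : P | p < η (c, qh)} inferInstance inferInstance
      (fun y => tup2 y.1) ?_ ?_ ?_
    · intro i
      refine Fin.lastCases ?_ ?_ i
      · rw [hδ₂, Fin.snoc_last]
        exact lt_of_lt_of_le hα (le_add_self)
      · intro j; rw [hδ₂, Fin.snoc_castSucc]; exact hγpos j
    · intro i _
      refine Fin.lastCases ?_ ?_ i
      · rw [hδ₂, htup2]
        simp only [Fin.snoc_last, Equiv.symm_apply_apply]
        exact ehbound qh (Or.inr hqh)
      · intro j
        rw [hδ₂, htup2]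
        simp only [Fin.snoc_castSucc, Equiv.symm_apply_apply]
        exact elRank_lt_ordRank _
    · rintro ⟨y, hy⟩ i
      refine Fin.lastCases ?_ ?_ i
      · rw [hδ₂, htup2]
        simp only [Fin.snoc_last]
        exact ehbound _ (hcls y hy).1
      · intro j
        rw [hδ₂, htup2]
        simp only [Fin.snoc_castSucc]
        exact elRank_lt_ordRank _
    · rintro ⟨y, hy⟩ ⟨y', hy'⟩ hyy'
      have h := struct' hP hbox (show y < y' from hyy')
      rcases h with h2 | ⟨_, k, hk⟩
      · refine ⟨Fin.last n, ?_⟩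
        rw [htup2]
        simp only [Fin.snoc_last]
        exact ehlt _ _ h2 (hcls y hy).1 (hcls y' hy').1
      · refine ⟨k.castSucc, ?_⟩
        rw [htup2]
        simp only [Fin.snoc_castSucc]
        exact elRank_lt_of_lt hk
    · rintro ⟨y, hy⟩
      rcases (hcls y hy).2 with h2 | ⟨k, hk⟩
      · refine ⟨Fin.last n, ?_⟩
        rw [htup2]
        simp only [Fin.snoc_last, Equiv.symm_apply_apply]
        exact ehlt _ _ h2 (hcls y hy).1 (Or.inr hqh)
      · refine ⟨k.castSucc, ?_⟩
        rw [htup2]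
        simp only [Fin.snoc_castSucc, Equiv.symm_apply_apply]
        exact elRank_lt_of_lt hk
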